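/- arXiv:0911.1618 — 4 statements merged into one kernel-verified Lean document; each statement's English description precedes it below -/
import Mathlib

section
/- Let π, ρ be admissible irreducible representations of M⁰, G⁰ respectively, π*, ρ* their smooth contragredients, and δ ∈ G with det(δ) = −1. Assume: if dim W is odd, π* ≅ π ≅ π^δ and (ρ* ≅ ρ or ρ* ≅ ρ^δ); if dim W is even, ρ* ≅ ρ ≅ ρ^δ and (π* ≅ π or π* ≅ π^δ). Then dim Hom_{G⁰}(π|_{G⁰}, ρ*) = dim Hom_{G⁰}(π|_{G⁰}, ρ) = dim Hom_{G⁰}((π*)|_{G⁰}, ρ). -/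
open Matrix

noncomputable section
section GroupDefs

variable {F : Type} [Field F] {n : Type} [Fintype n] [DecidableEq n]

/-- The orthogonal group of the bilinear form with Gram matrix `B`:
invertible matrices `g` with `gᵀ * B * g = B`, i.e. `<gv, gw> = <v, w>`. -/
def OGrp (B : Matrix n n F) : Subgroup (GL n F) where
  carrier := {g | (g : Matrix n n F)ᵀ * B * g = B}
  one_mem' := by simp
  mul_mem' := by
    intro a b ha hb
    simp only [Set.mem_setOf_eq] at *
    set u := (a : Matrix n n F)
    set w := (b : Matrix n n F)
    have h : ((a * b : GL n F) : Matrix n n F) = u * w := rfl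
    rw [h]
    calc (u * w)ᵀ * B * (u * w) = wᵀ * (uᵀ * B * u) * w := by rw [transpose_mul]; noncomm_ring
      _ = B := by rw [ha]; exact hb
  inv_mem' := by
    intro a ha
    simp only [Set.mem_setOf_eq] at *
    set u := (a : Matrix n n F)
    set v := ((a⁻¹ : GL n F) : Matrix n n F)
    have h2 : u * v = 1 := a.mul_inv
    calc vᵀ * B * v = vᵀ * (uᵀ * B * u) * v := by rw [ha]
      _ = (u * v)ᵀ * B * (u * v) := by rw [transpose_mul]; noncomm_ring
      _ = B := by rw [h2]; simp

/-- The special orthogonal group of `B`: isometries of determinant `1`. -/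
def SOGrp (B : Matrix n n F) : Subgroup (GL n F) :=
  OGrp B ⊓ (Matrix.GeneralLinearGroup.det : GL n F →* Fˣ).ker

lemma SOGrp_conj_mem {B : Matrix n n F} {g x : GL n F}
    (hg : g ∈ OGrp B) (hx : x ∈ SOGrp B) (ε : ℤˣ) :
    g * x ^ (ε : ℤ) * g⁻¹ ∈ SOGrp B := by
  rw [SOGrp, Subgroup.mem_inf] at hx ⊢
  obtain ⟨hx1, hx2⟩ := hx
  have hxε1 : x ^ (ε : ℤ) ∈ OGrp B := Subgroup.zpow_mem _ hx1 _
  have hxε2 : x ^ (ε : ℤ) ∈ (Matrix.GeneralLinearGroup.det : GL n F →* Fˣ).ker :=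
    Subgroup.zpow_mem _ hx2 _
  refine ⟨(OGrp B).mul_mem ((OGrp B).mul_mem hg hxε1) ((OGrp B).inv_mem hg), ?_⟩
  rw [MonoidHom.mem_ker] at hxε2 ⊢
  rw [_root_.map_mul, _root_.map_mul, map_inv, hxε2, mul_one, mul_inv_cancel]

/-- The action of a pair `(g, ε)` (`g` in the orthogonal group, `ε = ±1`) on the special
orthogonal group: `x ↦ g xᵉ g⁻¹`. -/
def conjAct (B : Matrix n n F) (g : GL n F) (hg : g ∈ OGrp B) (ε : ℤˣ)
    (x : ↥(SOGrp B)) : ↥(SOGrp B) :=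
  ⟨g * (x : GL n F) ^ (ε : ℤ) * g⁻¹, SOGrp_conj_mem hg x.2 ε⟩

/-- The Lie algebra `𝔤` of the special orthogonal group of `B`:
matrices `X` with `Xᵀ * B + B * X = 0`, i.e. `<Xv, w> + <v, Xw> = 0`. -/
def lieAlg (B : Matrix n n F) : Submodule F (Matrix n n F) where
  carrier := {X | Xᵀ * B + B * X = 0}
  add_mem' := by
    intro a b ha hb
    simp only [Set.mem_setOf_eq] at *
    rw [transpose_add]
    linear_combination (norm := noncomm_ring) ha + hb
  zero_mem' := by simp
  smul_mem' := by
    intro t X hX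
    simp only [Set.mem_setOf_eq] at *
    rw [transpose_smul, smul_mul_assoc, mul_smul_comm, ← smul_add, hX, smul_zero]

lemma lieAlg_conj_mem {B : Matrix n n F} {g : GL n F}
    (hg : g ∈ OGrp B) (ε : ℤˣ) {X : Matrix n n F} (hX : X ∈ lieAlg B) :
    ((ε : ℤ) : F) • ((g : Matrix n n F) * X *
      ((g⁻¹ : GL n F) : Matrix n n F)) ∈ lieAlg B := by
  set u := (g : Matrix n n F) with hu
  set v := ((g⁻¹ : GL n F) : Matrix n n F) with hvv
  have h : uᵀ * B * u = B := hg
  have huv : u * v = 1 := g.mul_inv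
  have hBu : uᵀ * B = B * v := by
    calc uᵀ * B = uᵀ * B * (u * v) := by rw [huv, mul_one]
      _ = (uᵀ * B * u) * v := by noncomm_ring
      _ = B * v := by rw [h]
  have huB : B * u = vᵀ * B := by
    calc B * u = (u * v)ᵀ * B * u := by rw [huv]; simp
      _ = vᵀ * (uᵀ * B * u) := by rw [transpose_mul]; noncomm_ring
      _ = vᵀ * B := by rw [h]
  have hX' : Xᵀ * B = -(B * X) := by
    have h0 : Xᵀ * B + B * X = 0 := hX
    linear_combination (norm := noncomm_ring) h0
  have key : vᵀ * Xᵀ * uᵀ * B + B * (u * X * v) = 0 := by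
    calc vᵀ * Xᵀ * uᵀ * B + B * (u * X * v)
        = vᵀ * Xᵀ * (uᵀ * B) + (B * u) * X * v := by noncomm_ring
      _ = vᵀ * (Xᵀ * B) * v + vᵀ * B * X * v := by rw [hBu, huB]; noncomm_ring
      _ = vᵀ * (-(B * X)) * v + vᵀ * B * X * v := by rw [hX']
      _ = 0 := by noncomm_ring
  show (((ε : ℤ) : F) • (u * X * v))ᵀ * B + B * (((ε : ℤ) : F) • (u * X * v)) = 0
  have expand : (((ε : ℤ) : F) • (u * X * v))ᵀ * B + B * (((ε : ℤ) : F) • (u * X * v))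
      = ((ε : ℤ) : F) • (vᵀ * Xᵀ * uᵀ * B + B * (u * X * v)) := by
    rw [transpose_smul, transpose_mul, transpose_mul, smul_mul_assoc, mul_smul_comm, ← smul_add]
    congr 1
    noncomm_ring
  rw [expand, key, smul_zero]

/-- The action of a pair `(g, ε)` on the Lie algebra `𝔤`: `X ↦ ε g X g⁻¹`. -/
def lieAct (B : Matrix n n F) (g : GL n F) (hg : g ∈ OGrp B) (ε : ℤˣ)
    (X : ↥(lieAlg B)) : ↥(lieAlg B) :=
  ⟨((ε : ℤ) : F) • ((g : Matrix n n F) * (X : Matrix n n F) *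
      ((g⁻¹ : GL n F) : Matrix n n F)), lieAlg_conj_mem hg ε X.2⟩

/-- The action of a pair `(g, ε)` on `V`: `v ↦ ε g v`. -/
def vecAct (g : GL n F) (ε : ℤˣ) (v : n → F) : n → F :=
  ((ε : ℤ) : F) • (g : Matrix n n F).mulVec v

end GroupDefs
section ConjHom

variable {F : Type} [Field F] {n : Type} [Fintype n] [DecidableEq n]

lemma SOGrp_conj_mem' {B : Matrix n n F} {g x : GL n F}
    (hg : g ∈ OGrp B) (hx : x ∈ SOGrp B) : g * x * g⁻¹ ∈ SOGrp B := by
  have h := SOGrp_conj_mem hg hx 1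
  simpa using h

/-- Conjugation `x ↦ δ x δ⁻¹` by an element `δ` of the orthogonal group, as an
automorphism of the special orthogonal group. -/
def conjSOHom (B : Matrix n n F) (δ : GL n F) (hδ : δ ∈ OGrp B) :
    ↥(SOGrp B) →* ↥(SOGrp B) where
  toFun x := ⟨δ * (x : GL n F) * δ⁻¹, SOGrp_conj_mem' hδ x.2⟩
  map_one' := by
    apply Subtype.ext
    simp
  map_mul' x y := by
    apply Subtype.ext
    show δ * ((x : GL n F) * (y : GL n F)) * δ⁻¹ = (δ * x * δ⁻¹) * (δ * y * δ⁻¹)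
    group

end ConjHom
section WSetup

variable {F : Type} [Field F]

variable {dV : ℕ}

/-- The Gram matrix of `W = V ⊕ U` (orthogonal direct sum), where `V` has Gram matrix `BV`
and the line `U` has a basis vector of square-norm `c`. -/
def BWmat (BV : Matrix (Fin dV) (Fin dV) F) (c : F) :
    Matrix (Fin dV ⊕ Fin 1) (Fin dV ⊕ Fin 1) F :=
  Matrix.fromBlocks BV 0 0 (Matrix.diagonal fun _ => c)

/-- The multiplicative embedding `A ↦ A ⊕ 1` of endomorphisms of `V` into endomorphisms
of `W = V ⊕ U`, acting trivially on `U`. -/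
def embMat : Matrix (Fin dV) (Fin dV) F →* Matrix (Fin dV ⊕ Fin 1) (Fin dV ⊕ Fin 1) F where
  toFun A := Matrix.fromBlocks A 0 0 1
  map_one' := Matrix.fromBlocks_one
  map_mul' A B := by
    rw [Matrix.fromBlocks_multiply]
    simp

/-- The embedding `GL(V) → GL(W)`, `g ↦ g ⊕ 1`. -/
def embGL : GL (Fin dV) F →* GL (Fin dV ⊕ Fin 1) F := Units.map embMat

lemma embGL_coe (g : GL (Fin dV) F) :
    ((embGL g : GL (Fin dV ⊕ Fin 1) F) : Matrix (Fin dV ⊕ Fin 1) (Fin dV ⊕ Fin 1) F)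
      = Matrix.fromBlocks (g : Matrix (Fin dV) (Fin dV) F) 0 0 1 := rfl

/-- `G` embeds into `M` (the subgroup fixing `U` pointwise). -/
lemma embGL_og {BV : Matrix (Fin dV) (Fin dV) F} {c : F} {g : GL (Fin dV) F}
    (hg : g ∈ OGrp BV) : embGL g ∈ OGrp (BWmat BV c) := by
  have h : (g : Matrix (Fin dV) (Fin dV) F)ᵀ * BV * g = BV := hg
  show _ = _
  rw [embGL_coe, BWmat, Matrix.fromBlocks_transpose, Matrix.fromBlocks_multiply,
    Matrix.fromBlocks_multiply]
  simp [h]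

lemma embGL_det (g : GL (Fin dV) F) :
    Matrix.det ((embGL g : GL (Fin dV ⊕ Fin 1) F) : Matrix (Fin dV ⊕ Fin 1) (Fin dV ⊕ Fin 1) F)
      = Matrix.det (g : Matrix (Fin dV) (Fin dV) F) := by
  rw [embGL_coe, Matrix.det_fromBlocks_zero₂₁]
  simp

/-- `G⁰` embeds into `M⁰`. -/
lemma embGL_so {BV : Matrix (Fin dV) (Fin dV) F} {c : F} {g : GL (Fin dV) F}
    (hg : g ∈ SOGrp BV) : embGL g ∈ SOGrp (BWmat BV c) := by
  rw [SOGrp, Subgroup.mem_inf] at hg ⊢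
  refine ⟨embGL_og hg.1, ?_⟩
  have h2 := hg.2
  rw [MonoidHom.mem_ker] at h2 ⊢
  apply Units.ext
  have hval : ((Matrix.GeneralLinearGroup.det (embGL g : GL (Fin dV ⊕ Fin 1) F)) : F)
      = Matrix.det ((embGL g : GL (Fin dV ⊕ Fin 1) F) : Matrix (Fin dV ⊕ Fin 1) (Fin dV ⊕ Fin 1) F) := rfl
  rw [hval, embGL_det]
  have : ((Matrix.GeneralLinearGroup.det g : Fˣ) : F) = Matrix.det (g : Matrix (Fin dV) (Fin dV) F) := rfl
  rw [← this, h2, Units.val_one]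

/-- The embedding `SO(V) →* SO(W)` of special orthogonal groups given by `g ↦ g ⊕ 1`. -/
def ιSO (BV : Matrix (Fin dV) (Fin dV) F) (c : F) : ↥(SOGrp BV) →* ↥(SOGrp (BWmat BV c)) :=
  MonoidHom.codRestrict ((embGL (F := F) (dV := dV)).comp (SOGrp BV).subtype) _
    (fun x => embGL_so x.2)

end WSetup
section Representations

variable {G : Type*} [Group G] {E : Type*} [AddCommGroup E] [Module ℂ E]
  {E₁ : Type*} [AddCommGroup E₁] [Module ℂ E₁] {E₂ : Type*} [AddCommGroup E₂] [Module ℂ E₂]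

/-- The stabilizer of a vector `v` under a representation `π`. -/
def repStab (π : Representation ℂ G E) (v : E) : Subgroup G where
  carrier := {g | π g v = v}
  one_mem' := by simp
  mul_mem' := by
    intro a b ha hb
    simp only [Set.mem_setOf_eq] at *
    rw [_root_.map_mul, Module.End.mul_apply, hb, ha]
  inv_mem' := by
    intro a ha
    simp only [Set.mem_setOf_eq] at *
    conv_lhs => rw [← ha]
    rw [← Module.End.mul_apply, ← _root_.map_mul, inv_mul_cancel, _root_.map_one, Module.End.one_apply]

/-- A representation is smooth if every vector has open stabilizer. -/
def IsSmoothRep [TopologicalSpace G] (π : Representation ℂ G E) : Prop :=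
  ∀ v : E, IsOpen ((repStab π v : Subgroup G) : Set G)

/-- The subspace `E^K` of `K`-fixed vectors. -/
def fixedVecs (π : Representation ℂ G E) (K : Subgroup G) : Submodule ℂ E where
  carrier := {v | ∀ k ∈ K, π k v = v}
  add_mem' := by
    intro a b ha hb k hk
    rw [_root_.map_add, ha k hk, hb k hk]
  zero_mem' := by
    intro k hk
    rw [_root_.map_zero]
  smul_mem' := by
    intro c v hv k hk
    rw [_root_.map_smul, hv k hk]

/-- A representation is admissible if it is smooth and, for every compact open subgroup `K`,
the space of `K`-fixed vectors is finite-dimensional. -/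
def IsAdmissibleRep [TopologicalSpace G] (π : Representation ℂ G E) : Prop :=
  IsSmoothRep π ∧ ∀ K : Subgroup G, IsCompact (K : Set G) → IsOpen (K : Set G) →
    FiniteDimensional ℂ ↥(fixedVecs π K)

/-- A representation is irreducible if the space is nonzero and has no invariant subspaces
other than `0` and the whole space. -/
def IsIrreducibleRep (π : Representation ℂ G E) : Prop :=
  Nontrivial E ∧ ∀ q : Submodule ℂ E, (∀ (g : G), ∀ v ∈ q, π g v ∈ q) → q = ⊥ ∨ q = ⊤

/-- The space of `G`-equivariant linear maps between (the spaces of) two representations. -/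
def equivHom (π : Representation ℂ G E₁) (ρ : Representation ℂ G E₂) :
    Submodule ℂ (E₁ →ₗ[ℂ] E₂) where
  carrier := {A | ∀ (g : G) (v : E₁), A (π g v) = ρ g (A v)}
  add_mem' := by
    intro A B hA hB g v
    simp only [LinearMap.add_apply, _root_.map_add]
    rw [hA g v, hB g v]
  zero_mem' := by
    intro g v
    simp
  smul_mem' := by
    intro c A hA g v
    simp only [LinearMap.smul_apply]
    rw [hA g v, _root_.map_smul]

/-- The subspace of smooth vectors of a representation. -/
def smoothVecs [TopologicalSpace G] [ContinuousMul G] (π : Representation ℂ G E) :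
    Submodule ℂ E where
  carrier := {v | IsOpen ((repStab π v : Subgroup G) : Set G)}
  zero_mem' := by
    show IsOpen _
    have h : ((repStab π (0 : E) : Subgroup G) : Set G) = Set.univ := by
      ext g
      simp only [SetLike.mem_coe, Set.mem_univ, iff_true]
      show π g 0 = 0
      simp
    rw [h]
    exact isOpen_univ
  add_mem' := by
    intro a b ha hb
    refine Subgroup.isOpen_mono (H₁ := repStab π a ⊓ repStab π b) ?_ ?_
    · intro g hg
      rw [Subgroup.mem_inf] at hg
      show π g (a + b) = a + b
      rw [_root_.map_add, show π g a = a from hg.1, show π g b = b from hg.2]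
    · rw [Subgroup.coe_inf]
      exact IsOpen.inter ha hb
  smul_mem' := by
    intro c v hv
    refine Subgroup.isOpen_mono (H₁ := repStab π v) ?_ hv
    intro g hg
    show π g (c • v) = c • v
    rw [_root_.map_smul, show π g v = v from hg]

lemma dual_smooth_mem [TopologicalSpace G] [IsTopologicalGroup G] (π : Representation ℂ G E)
    (g : G) {l : Module.Dual ℂ E} (hl : l ∈ smoothVecs π.dual) :
    π.dual g l ∈ smoothVecs π.dual := by
  have e1 : ∀ (a b : G) (m : Module.Dual ℂ E), π.dual (a * b) m = π.dual a (π.dual b m) := by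
    intro a b m
    rw [_root_.map_mul, Module.End.mul_apply]
  have hset : ((repStab π.dual (π.dual g l) : Subgroup G) : Set G)
      = (fun h => g⁻¹ * h * g) ⁻¹' ((repStab π.dual l : Subgroup G) : Set G) := by
    ext h
    simp only [Set.mem_preimage, SetLike.mem_coe]
    constructor
    · intro hh
      have hh' : π.dual h (π.dual g l) = π.dual g l := hh
      show π.dual (g⁻¹ * h * g) l = l
      rw [e1, e1, hh', ← e1, inv_mul_cancel, _root_.map_one, Module.End.one_apply]
    · intro hh
      have hh' : π.dual (g⁻¹ * h * g) l = l := hh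
      show π.dual h (π.dual g l) = π.dual g l
      calc π.dual h (π.dual g l) = π.dual (h * g) l := (e1 h g l).symm
        _ = π.dual (g * (g⁻¹ * h * g)) l := by group
        _ = π.dual g (π.dual (g⁻¹ * h * g) l) := e1 _ _ _
        _ = π.dual g l := by rw [hh']
  show IsOpen _
  rw [hset]
  exact IsOpen.preimage ((continuous_const.mul continuous_id).mul continuous_const) hl

/-- The smooth contragredient `π*` of a representation `π`: the natural action on the
smooth vectors of the full linear dual, `(π*(x) λ)(v) = λ(π(x⁻¹) v)`. -/
def smoothDual [TopologicalSpace G] [IsTopologicalGroup G] (π : Representation ℂ G E) :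
    Representation ℂ G ↥(smoothVecs π.dual) where
  toFun g := (π.dual g).restrict (fun _ hx => dual_smooth_mem π g hx)
  map_one' := by
    refine LinearMap.ext fun v => Subtype.ext ?_
    rw [Module.End.one_apply, LinearMap.restrict_apply]
    show (π.dual 1) v.val = v.val
    rw [_root_.map_one, Module.End.one_apply]
  map_mul' g h := by
    refine LinearMap.ext fun v => Subtype.ext ?_
    rw [Module.End.mul_apply, LinearMap.restrict_apply, LinearMap.restrict_apply,
      LinearMap.restrict_apply]
    show (π.dual (g * h)) v.val = (π.dual g) ((π.dual h) v.val)
    rw [_root_.map_mul, Module.End.mul_apply]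

/-- Two representations are equivalent (isomorphic) if there is an equivariant linear
isomorphism between their spaces. -/
def RepEquivalent (π : Representation ℂ G E₁) (ρ : Representation ℂ G E₂) : Prop :=
  ∃ e : E₁ ≃ₗ[ℂ] E₂, ∀ (g : G) (v : E₁), e (π g v) = ρ g (e v)

end Representations

section AuxLemmas

variable {G G' : Type*} [Group G] [Group G']
  {E₁ : Type} [AddCommGroup E₁] [Module ℂ E₁]
  {E₂ : Type} [AddCommGroup E₂] [Module ℂ E₂]
  {E₁' : Type} [AddCommGroup E₁'] [Module ℂ E₁']
  {E₂' : Type} [AddCommGroup E₂'] [Module ℂ E₂']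

lemma mem_equivHom_iff {σ : Representation ℂ G E₁} {τ : Representation ℂ G E₂}
    {A : E₁ →ₗ[ℂ] E₂} : A ∈ equivHom σ τ ↔ ∀ (g : G) (v : E₁), A (σ g v) = τ g (A v) :=
  Iff.rfl

/-- Composing both representations with a surjective homomorphism does not change the
space of equivariant maps. -/
lemma equivHom_comp_eq (c : G' →* G) (hc : Function.Surjective c)
    (σ : Representation ℂ G E₁) (τ : Representation ℂ G E₂) :
    equivHom (σ.comp c) (τ.comp c) = equivHom σ τ := by
  ext A
  rw [mem_equivHom_iff, mem_equivHom_iff]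
  constructor
  · intro hA g v
    obtain ⟨g', rfl⟩ := hc g
    exact hA g' v
  · intro hA g' v
    exact hA (c g') v

/-- An equivalence of targets gives an equality of ranks of Hom-spaces. -/
lemma rank_equivHom_right {τ₁ : Representation ℂ G E₂} {τ₂ : Representation ℂ G E₂'}
    (h : RepEquivalent τ₁ τ₂) (σ : Representation ℂ G E₁) :
    Module.rank ℂ ↥(equivHom σ τ₁) = Module.rank ℂ ↥(equivHom σ τ₂) := by
  obtain ⟨e, he⟩ := h
  have he' : ∀ (g : G) (w : E₂'), e.symm (τ₂ g w) = τ₁ g (e.symm w) := by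
    intro g w
    apply e.injective
    rw [he, e.apply_symm_apply, e.apply_symm_apply]
  refine LinearEquiv.rank_eq
    { toFun := fun A => ⟨e.toLinearMap ∘ₗ A.1, fun g v => by
        simp only [LinearMap.comp_apply, LinearEquiv.coe_coe]
        rw [A.2 g v, he]⟩
      invFun := fun A => ⟨e.symm.toLinearMap ∘ₗ A.1, fun g v => by
        simp only [LinearMap.comp_apply, LinearEquiv.coe_coe]
        rw [A.2 g v, he']⟩
      map_add' := fun A B => by
        apply Subtype.ext
        simp [LinearMap.comp_add]
      map_smul' := fun t A => by
        apply Subtype.ext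
        simp [LinearMap.comp_smul]
      left_inv := fun A => by
        apply Subtype.ext
        ext v
        simp
      right_inv := fun A => by
        apply Subtype.ext
        ext v
        simp }

/-- An equivalence of sources gives an equality of ranks of Hom-spaces. -/
lemma rank_equivHom_left {σ₁ : Representation ℂ G E₁} {σ₂ : Representation ℂ G E₁'}
    (h : RepEquivalent σ₁ σ₂) (τ : Representation ℂ G E₂) :
    Module.rank ℂ ↥(equivHom σ₁ τ) = Module.rank ℂ ↥(equivHom σ₂ τ) := by
  obtain ⟨e, he⟩ := h
  have he' : ∀ (g : G) (w : E₁'), e.symm (σ₂ g w) = σ₁ g (e.symm w) := by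
    intro g w
    apply e.injective
    rw [he, e.apply_symm_apply, e.apply_symm_apply]
  refine LinearEquiv.rank_eq
    { toFun := fun A => ⟨A.1 ∘ₗ e.symm.toLinearMap, fun g v => by
        simp only [LinearMap.comp_apply, LinearEquiv.coe_coe]
        rw [he', A.2 g]⟩
      invFun := fun A => ⟨A.1 ∘ₗ e.toLinearMap, fun g v => by
        simp only [LinearMap.comp_apply, LinearEquiv.coe_coe]
        rw [he, A.2 g]⟩
      map_add' := fun A B => by
        apply Subtype.ext
        simp [LinearMap.add_comp]
      map_smul' := fun t A => by
        apply Subtype.ext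
        simp [LinearMap.smul_comp]
      left_inv := fun A => by
        apply Subtype.ext
        ext v
        simp
      right_inv := fun A => by
        apply Subtype.ext
        ext v
        simp }

/-- Restricting an equivalence along a homomorphism. -/
lemma repEquiv_comp {σ : Representation ℂ G E₁} {τ : Representation ℂ G E₂}
    (h : RepEquivalent σ τ) (f : G' →* G) :
    RepEquivalent (σ.comp f) (τ.comp f) := by
  obtain ⟨e, he⟩ := h
  exact ⟨e, fun g v => he (f g) v⟩

/-- If `σ ∘ c ≅ σ` and `d` is a right inverse of `c`, then `σ ≅ σ ∘ d`. -/
lemma repEquiv_inv (c d : G →* G) (hcd : ∀ y, c (d y) = y)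
    {σ : Representation ℂ G E₁} (h : RepEquivalent (σ.comp c) σ) :
    RepEquivalent σ (σ.comp d) := by
  obtain ⟨e, he⟩ := h
  refine ⟨e, fun y v => ?_⟩
  have h1 := he (d y) v
  have h2 : (σ.comp c) (d y) = σ y := by rw [MonoidHom.comp_apply, hcd]
  rw [h2] at h1
  exact h1

end AuxLemmas

section ConjAux

variable {F : Type} [Field F] {n : Type} [Fintype n] [DecidableEq n]

lemma conjSOHom_apply_coe (B : Matrix n n F) (δ : GL n F) (hδ : δ ∈ OGrp B)
    (x : ↥(SOGrp B)) : ((conjSOHom B δ hδ x : ↥(SOGrp B)) : GL n F) = δ * x * δ⁻¹ := rfl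

lemma conjSOHom_inv_right (B : Matrix n n F) (δ : GL n F) (hδ : δ ∈ OGrp B)
    (hδ' : δ⁻¹ ∈ OGrp B) (y : ↥(SOGrp B)) :
    conjSOHom B δ hδ (conjSOHom B δ⁻¹ hδ' y) = y := by
  apply Subtype.ext
  show δ * (δ⁻¹ * (y : GL n F) * δ⁻¹⁻¹) * δ⁻¹ = y
  group

lemma conjSOHom_inv_left (B : Matrix n n F) (δ : GL n F) (hδ : δ ∈ OGrp B)
    (hδ' : δ⁻¹ ∈ OGrp B) (y : ↥(SOGrp B)) :
    conjSOHom B δ⁻¹ hδ' (conjSOHom B δ hδ y) = y := by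
  apply Subtype.ext
  show δ⁻¹ * (δ * (y : GL n F) * δ⁻¹) * δ⁻¹⁻¹ = y
  group

lemma conjSOHom_surjective (B : Matrix n n F) (δ : GL n F) (hδ : δ ∈ OGrp B) :
    Function.Surjective (conjSOHom B δ hδ) := fun y =>
  ⟨conjSOHom B δ⁻¹ ((OGrp B).inv_mem hδ) y,
    conjSOHom_inv_right B δ hδ ((OGrp B).inv_mem hδ) y⟩

end ConjAux

section SwapAux

variable {F : Type} [Field F] {dV : ℕ}

/-- Conjugation by `δ ⊕ 1` upstairs corresponds to conjugation by `δ` downstairs. -/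
lemma swap_comp (BV : Matrix (Fin dV) (Fin dV) F) (c : F)
    {E : Type*} [AddCommGroup E] [Module ℂ E]
    (σ : Representation ℂ ↥(SOGrp (BWmat BV c)) E)
    (g : GL (Fin dV) F) (hg : g ∈ OGrp BV) :
    (σ.comp (conjSOHom (BWmat BV c) (embGL g) (embGL_og (c := c) hg))).comp (ιSO BV c)
      = (σ.comp (ιSO BV c)).comp (conjSOHom BV g hg) := by
  refine MonoidHom.ext fun x => ?_
  show σ _ = σ _
  congr 1
  apply Subtype.ext
  show embGL g * embGL (x : GL (Fin dV) F) * (embGL g)⁻¹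
      = embGL (g * (x : GL (Fin dV) F) * g⁻¹)
  rw [_root_.map_mul, _root_.map_mul, map_inv]

/-- Untwisting a conjugation on the right. -/
lemma comp_conj_conj_inv (BV : Matrix (Fin dV) (Fin dV) F)
    {E : Type*} [AddCommGroup E] [Module ℂ E]
    (τ : Representation ℂ ↥(SOGrp BV) E)
    (g : GL (Fin dV) F) (hg : g ∈ OGrp BV) (hg' : g⁻¹ ∈ OGrp BV) :
    (τ.comp (conjSOHom BV g hg)).comp (conjSOHom BV g⁻¹ hg') = τ := by
  refine MonoidHom.ext fun x => ?_
  show τ (conjSOHom BV g hg (conjSOHom BV g⁻¹ hg' x)) = τ x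
  rw [conjSOHom_inv_right]

lemma comp_conj_inv_conj (BV : Matrix (Fin dV) (Fin dV) F)
    {E : Type*} [AddCommGroup E] [Module ℂ E]
    (τ : Representation ℂ ↥(SOGrp BV) E)
    (g : GL (Fin dV) F) (hg : g ∈ OGrp BV) (hg' : g⁻¹ ∈ OGrp BV) :
    (τ.comp (conjSOHom BV g⁻¹ hg')).comp (conjSOHom BV g hg) = τ := by
  refine MonoidHom.ext fun x => ?_
  show τ (conjSOHom BV g⁻¹ hg' (conjSOHom BV g hg x)) = τ x
  rw [conjSOHom_inv_left]

end SwapAux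

/-- Let `W = V ⊕ U` as above, `π`, `ρ` admissible irreducible representations of
`M⁰ = SO(W)`, `G⁰ = SO(V)`, with smooth contragredients `π*`, `ρ*`, and let
`δ ∈ G = O(V)` with `det δ = −1`.  Assume: if `dim W` is odd then `π* ≅ π ≅ π^δ` and
(`ρ* ≅ ρ` or `ρ* ≅ ρ^δ`); if `dim W` is even then `ρ* ≅ ρ ≅ ρ^δ` and (`π* ≅ π` or
`π* ≅ π^δ`).  Then
`dim Hom_{G⁰}(π|, ρ*) = dim Hom_{G⁰}(π|, ρ) = dim Hom_{G⁰}(π*|, ρ)`. -/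
theorem equivHom_dual_rank_eq (p : ℕ) [Fact p.Prime] (F : Type) [Field F] [TopologicalSpace F]
    [IsTopologicalRing F] [Algebra ℚ_[p] F] [FiniteDimensional ℚ_[p] F]
    [ContinuousSMul ℚ_[p] F] [T2Space F]
    (dV : ℕ) (BV : Matrix (Fin dV) (Fin dV) F) (hBVsym : BVᵀ = BV)
    (hBVnondeg : IsUnit BV.det) (c : F) (hc : c ≠ 0)
    (Eπ : Type) [AddCommGroup Eπ] [Module ℂ Eπ]
    (Eρ : Type) [AddCommGroup Eρ] [Module ℂ Eρ]
    (π : Representation ℂ ↥(SOGrp (BWmat BV c)) Eπ)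
    (ρ : Representation ℂ ↥(SOGrp BV) Eρ)
    (hπadm : IsAdmissibleRep π) (hπirr : IsIrreducibleRep π)
    (hρadm : IsAdmissibleRep ρ) (hρirr : IsIrreducibleRep ρ)
    (δ : GL (Fin dV) F) (hδ : δ ∈ OGrp BV)
    (hδdet : (δ : Matrix (Fin dV) (Fin dV) F).det = -1)
    (hWodd : Odd (dV + 1) →
      RepEquivalent (smoothDual π) π ∧
      RepEquivalent (π.comp (conjSOHom (BWmat BV c) (embGL δ) (embGL_og hδ))) π ∧
      (RepEquivalent (smoothDual ρ) ρ ∨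
        RepEquivalent (smoothDual ρ) (ρ.comp (conjSOHom BV δ hδ))))
    (hWeven : Even (dV + 1) →
      RepEquivalent (smoothDual ρ) ρ ∧
      RepEquivalent (ρ.comp (conjSOHom BV δ hδ)) ρ ∧
      (RepEquivalent (smoothDual π) π ∨
        RepEquivalent (smoothDual π)
          (π.comp (conjSOHom (BWmat BV c) (embGL δ) (embGL_og hδ))))) :
    Module.rank ℂ ↥(equivHom (π.comp (ιSO BV c)) (smoothDual ρ))
      = Module.rank ℂ ↥(equivHom (π.comp (ιSO BV c)) ρ)
    ∧ Module.rank ℂ ↥(equivHom (π.comp (ιSO BV c)) ρ)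
      = Module.rank ℂ ↥(equivHom ((smoothDual π).comp (ιSO BV c)) ρ) := by
  have hδi : δ⁻¹ ∈ OGrp BV := (OGrp BV).inv_mem hδ
  have hsurjV : Function.Surjective (conjSOHom BV δ hδ) := conjSOHom_surjective BV δ hδ
  have hsurjV' : Function.Surjective (conjSOHom BV δ⁻¹ hδi) :=
    conjSOHom_surjective BV δ⁻¹ hδi
  have hVV' : ∀ y, conjSOHom BV δ hδ (conjSOHom BV δ⁻¹ hδi y) = y :=
    conjSOHom_inv_right BV δ hδ hδi
  have hWW' : ∀ y, conjSOHom (BWmat BV c) (embGL δ) (embGL_og hδ)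
      (conjSOHom (BWmat BV c) (embGL δ⁻¹) (embGL_og hδi) y) = y := by
    intro y
    apply Subtype.ext
    show embGL δ * (embGL δ⁻¹ * (y : GL (Fin dV ⊕ Fin 1) F) * (embGL δ⁻¹)⁻¹) * (embGL δ)⁻¹
        = (y : GL (Fin dV ⊕ Fin 1) F)
    rw [map_inv]
    group
  rcases Nat.even_or_odd (dV + 1) with hev | hod
  · -- even case
    obtain ⟨hρd, hρc, hπ⟩ := hWeven hev
    constructor
    · exact rank_equivHom_right hρd _
    · rcases hπ with hπ1 | hπ2
      · exact (rank_equivHom_left (repEquiv_comp hπ1 (ιSO BV c)) ρ).symm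
      · have step1 : Module.rank ℂ ↥(equivHom ((smoothDual π).comp (ιSO BV c)) ρ)
            = Module.rank ℂ ↥(equivHom
              ((π.comp (conjSOHom (BWmat BV c) (embGL δ) (embGL_og hδ))).comp (ιSO BV c)) ρ) :=
          rank_equivHom_left (repEquiv_comp hπ2 (ιSO BV c)) ρ
        rw [step1, swap_comp BV c π δ hδ]
        have h1 := equivHom_comp_eq (conjSOHom BV δ hδ) hsurjV (π.comp (ιSO BV c))
          (ρ.comp (conjSOHom BV δ⁻¹ hδi))
        rw [comp_conj_inv_conj BV ρ δ hδ hδi] at h1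
        rw [h1]
        exact rank_equivHom_right (repEquiv_inv _ _ hVV' hρc) _
  · -- odd case
    obtain ⟨hπd, hπc, hρ⟩ := hWodd hod
    constructor
    · rcases hρ with hρ1 | hρ2
      · exact rank_equivHom_right hρ1 _
      · have step1 : Module.rank ℂ ↥(equivHom (π.comp (ιSO BV c)) (smoothDual ρ))
            = Module.rank ℂ ↥(equivHom (π.comp (ιSO BV c)) (ρ.comp (conjSOHom BV δ hδ))) :=
          rank_equivHom_right hρ2 _
        rw [step1]
        have h1 := equivHom_comp_eq (conjSOHom BV δ⁻¹ hδi) hsurjV' (π.comp (ιSO BV c))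
          (ρ.comp (conjSOHom BV δ hδ))
        rw [comp_conj_conj_inv BV ρ δ hδ hδi] at h1
        rw [← h1, ← swap_comp BV c π δ⁻¹ hδi]
        have hπ' : RepEquivalent π
            (π.comp (conjSOHom (BWmat BV c) (embGL δ⁻¹) (embGL_og hδi))) :=
          repEquiv_inv _ _ hWW' hπc
        exact (rank_equivHom_left (repEquiv_comp hπ' (ιSO BV c)) ρ).symm
    · exact (rank_equivHom_left (repEquiv_comp hπd (ιSO BV c)) ρ).symm
end
end

section
/- Fix a nonzero vector e ∈ U and let M̄_e be the stabilizer of e in M̄ for the action (m,ε)·w = ε m w. Then a distribution T ∈ S'(M⁰) satisfies (m,ε)·T = ε·T for all (m,ε) ∈ M̄_e if and only if it satisfies (g,ε)·T = ε·T for all (g,ε) ∈ Ḡ; that is, S'(M⁰)^{M̄_e,χ} = S'(M⁰)^{Ḡ,χ}. -/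
open Matrix MeasureTheory

noncomputable section

/-- The space `S(X)` of locally constant, compactly supported `ℂ`-valued functions on a
topological space `X`. -/
def SchwartzSp (X : Type*) [TopologicalSpace X] : Submodule ℂ (X → ℂ) where
  carrier := {f | IsLocallyConstant f ∧ HasCompactSupport f}
  add_mem' := by
    rintro f g ⟨hf1, hf2⟩ ⟨hg1, hg2⟩
    exact ⟨hf1.add hg1, hf2.add hg2⟩
  zero_mem' := by
    refine ⟨?_, ?_⟩
    · exact IsLocallyConstant.const 0
    · exact HasCompactSupport.zero
  smul_mem' := by
    intro c f hf
    show IsLocallyConstant (c • f) ∧ HasCompactSupport (c • f)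
    exact ⟨hf.1.comp (c • ·), hf.2.smul_left⟩

/-- Distributions on `X`: the space `S'(X)`, the full linear dual of `S(X)`. -/
abbrev Distrn (X : Type*) [TopologicalSpace X] : Type _ := Module.Dual ℂ ↥(SchwartzSp X)

/-- The distribution `T` transforms by the scalar `c` under the map `σ : X → X`:
`T(f ∘ σ) = c * T(f)` for every `f ∈ S(X)`.  (If `σ` is the action of a group element `h⁻¹`,
this says `(h · T) = c • T` for the usual dual actions `(h·f)(x) = f(h⁻¹·x)`,
`(h·T)(f) = T(h⁻¹·f)`.) -/
def TransformsBy {X : Type*} [TopologicalSpace X] (T : Distrn X) (σ : X → X) (c : ℂ) : Prop :=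
  ∀ f g : ↥(SchwartzSp X), (∀ x, (g : X → ℂ) x = (f : X → ℂ) (σ x)) → T g = c * T f

/-- The support of the distribution `T` is contained in the closed set `C`:
`T` annihilates every `f ∈ S(X)` vanishing on `C` (such an `f`, being locally constant,
is supported in the open complement of `C`). -/
def SuppIn {X : Type*} [TopologicalSpace X] (T : Distrn X) (C : Set X) : Prop :=
  ∀ f : ↥(SchwartzSp X), (∀ x ∈ C, (f : X → ℂ) x = 0) → T f = 0
section AuxLemmas

variable {F : Type} [Field F]

lemma aux_neg_mem_OGrp {n : Type} [Fintype n] [DecidableEq n]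
    {B : Matrix n n F} {m : GL n F} (hm : m ∈ OGrp B) : -m ∈ OGrp B := by
  show ((-m : GL n F) : Matrix n n F)ᵀ * B * ((-m : GL n F) : Matrix n n F) = B
  rw [Units.val_neg, transpose_neg, neg_mul, neg_mul_neg]
  exact hm

lemma aux_neg_one_pow_congr {a b : ℕ} (h : a % 2 = b % 2) : (-1 : F)^a = (-1 : F)^b := by
  rcases Nat.even_or_odd a with ha | ha
  · have hb : Even b := by rw [Nat.even_iff] at *; omega
    rw [ha.neg_one_pow, hb.neg_one_pow]
  · have hb : Odd b := by rw [Nat.odd_iff] at *; omega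
    rw [ha.neg_one_pow, hb.neg_one_pow]

lemma aux_conjAct_eq {n : Type} [Fintype n] [DecidableEq n] (B : Matrix n n F)
    {m m₀ : GL n F} (h : (m : Matrix n n F) = (m₀ : Matrix n n F))
    (hm : m ∈ OGrp B) (hm₀ : m₀ ∈ OGrp B) (ε : ℤˣ) :
    conjAct B m hm ε = conjAct B m₀ hm₀ ε := by
  have hmm : m = m₀ := Units.ext h
  subst hmm; rfl

lemma aux_conjAct_neg {n : Type} [Fintype n] [DecidableEq n] (B : Matrix n n F)
    {m m₀ : GL n F} (h : (m : Matrix n n F) = -(m₀ : Matrix n n F))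
    (hm : m ∈ OGrp B) (hm₀ : m₀ ∈ OGrp B) (ε : ℤˣ) :
    conjAct B m hm ε = conjAct B m₀ hm₀ ε := by
  have hmm : m = -m₀ := Units.ext (by rw [h, Units.val_neg])
  subst hmm
  funext x
  apply Subtype.ext
  show (-m₀) * (x : GL n F)^(ε:ℤ) * (-m₀)⁻¹ = m₀ * (x : GL n F)^(ε:ℤ) * m₀⁻¹
  simp [inv_neg]

lemma aux_embGL_mulVec {dV : ℕ} (g : GL (Fin dV) F) (t : F) :
    ((embGL g : GL (Fin dV ⊕ Fin 1) F) : Matrix (Fin dV ⊕ Fin 1) (Fin dV ⊕ Fin 1) F).mulVec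
      (Sum.elim (fun _ => (0:F)) (fun _ => t)) = Sum.elim (fun _ => (0:F)) (fun _ => t) := by
  rw [embGL_coe]
  funext k
  rcases k with i | i
  · simp [mulVec, dotProduct, Fintype.sum_sum_type, Matrix.fromBlocks, Matrix.one_apply]
  · have hi : i = 0 := Subsingleton.elim i 0
    subst hi
    simp [mulVec, dotProduct, Fintype.sum_sum_type, Matrix.fromBlocks, Matrix.one_apply]

lemma aux_block_decomp {dV : ℕ} {BV : Matrix (Fin dV) (Fin dV) F} {c : F} (hc : c ≠ 0)
    {t : F} (ht : t ≠ 0) {εF : F} (hε : εF * εF = 1)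
    {m : GL (Fin dV ⊕ Fin 1) F} (hm : m ∈ OGrp (BWmat BV c))
    (hstab : (m : Matrix (Fin dV ⊕ Fin 1) (Fin dV ⊕ Fin 1) F).mulVec
        (Sum.elim (fun _ => (0:F)) (fun _ => t)) = εF • Sum.elim (fun _ => (0:F)) (fun _ => t)) :
    ∃ g : Matrix (Fin dV) (Fin dV) F, gᵀ * BV * g = BV ∧
      (m : Matrix (Fin dV ⊕ Fin 1) (Fin dV ⊕ Fin 1) F) = fromBlocks g 0 0 (εF • 1) := by
  set A : Matrix (Fin dV ⊕ Fin 1) (Fin dV ⊕ Fin 1) F :=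
      ((m : GL (Fin dV ⊕ Fin 1) F) : Matrix (Fin dV ⊕ Fin 1) (Fin dV ⊕ Fin 1) F) with hA
  have hεne : εF ≠ 0 := by intro h; rw [h, zero_mul] at hε; exact zero_ne_one hε
  have h12 : ∀ i : Fin dV, A (Sum.inl i) (Sum.inr 0) = 0 := by
    intro i
    have h := congrFun hstab (Sum.inl i)
    simp [mulVec, dotProduct, Fintype.sum_sum_type] at h
    rcases h with h' | h'
    · exact h'
    · exact absurd h' ht
  have h22 : A (Sum.inr 0) (Sum.inr 0) = εF := by
    have h := congrFun hstab (Sum.inr 0)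
    simp [mulVec, dotProduct, Fintype.sum_sum_type] at h
    exact h.resolve_right ht
  have hA12 : A.toBlocks₁₂ = 0 := by
    ext i j
    have hj : j = 0 := Subsingleton.elim j 0
    subst hj
    simpa [Matrix.toBlocks₁₂] using h12 i
  have hA22 : A.toBlocks₂₂ = εF • 1 := by
    ext i j
    have hi : i = 0 := Subsingleton.elim i 0
    have hj : j = 0 := Subsingleton.elim j 0
    subst hi; subst hj
    simpa [Matrix.toBlocks₂₂, Matrix.one_apply] using h22
  have hAeq : A = fromBlocks A.toBlocks₁₁ 0 A.toBlocks₂₁ (εF • 1) := by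
    rw [← hA12, ← hA22, fromBlocks_toBlocks]
  have horth : Aᵀ * BWmat BV c * A = BWmat BV c := hm
  rw [hAeq, BWmat, fromBlocks_transpose, fromBlocks_multiply, fromBlocks_multiply] at horth
  have h21 := congrArg Matrix.toBlocks₂₁ horth
  rw [toBlocks_fromBlocks₂₁, toBlocks_fromBlocks₂₁] at h21
  simp only [transpose_zero, transpose_smul, transpose_one, Matrix.zero_mul, Matrix.mul_zero,
    add_zero, zero_add, Matrix.smul_mul, Matrix.one_mul] at h21
  have hA21 : A.toBlocks₂₁ = 0 := by
    have hD : (diagonal fun _ : Fin 1 => c) * A.toBlocks₂₁ = 0 := by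
      rcases smul_eq_zero.mp h21 with h | h
      · exact absurd h hεne
      · exact h
    ext i j
    have hi : i = 0 := Subsingleton.elim i 0
    subst hi
    have h := congrFun (congrFun hD 0) j
    simp [Matrix.mul_apply, Matrix.diagonal, hc] at h
    simpa using h
  have h11 := congrArg Matrix.toBlocks₁₁ horth
  rw [toBlocks_fromBlocks₁₁, toBlocks_fromBlocks₁₁] at h11
  rw [hA21] at h11
  simp only [transpose_zero, Matrix.zero_mul, Matrix.mul_zero, add_zero, zero_add] at h11
  have hfin : A = fromBlocks A.toBlocks₁₁ 0 0 (εF • 1) := by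
    conv_lhs => rw [hAeq, hA21]
  exact ⟨A.toBlocks₁₁, h11, hfin⟩

end AuxLemmas

/-- Let `W = V ⊕ U` as above and fix a nonzero vector `e = w₀ ∈ U`.  Let `M̄_e` be the
stabilizer of `w₀` in `M̄ = {(m,ε) : m ∈ O(W), det m = ε^{e(W)}}` for the action
`(m,ε)·w = ε m w`.  A distribution `T` on `M⁰ = SO(W)` transforms by `χ(m,ε) = ε`
under `M̄_e` (acting by `(m,ε)·x = m xᵉ m⁻¹`) if and only if it transforms by `χ`
under `Ḡ = {(g,ε) : g ∈ O(V), det g = ε^{e(V)}}`: `S'(M⁰)^{M̄_e,χ} = S'(M⁰)^{Ḡ,χ}`. -/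
theorem MbarStab_chi_iff_Gbar_chi (p : ℕ) [Fact p.Prime] (F : Type) [Field F] [TopologicalSpace F]
    [IsTopologicalRing F] [Algebra ℚ_[p] F] [FiniteDimensional ℚ_[p] F]
    [ContinuousSMul ℚ_[p] F] [T2Space F]
    (dV : ℕ) (BV : Matrix (Fin dV) (Fin dV) F) (hBVsym : BVᵀ = BV)
    (hBVnondeg : IsUnit BV.det) (c : F) (hc : c ≠ 0)
    (t : F) (ht : t ≠ 0) (w₀ : (Fin dV ⊕ Fin 1) → F)
    (hw₀ : w₀ = Sum.elim (fun _ => (0 : F)) (fun _ => t))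
    (T : Distrn ↥(SOGrp (BWmat BV c))) :
    (∀ (m : GL (Fin dV ⊕ Fin 1) F) (hm : m ∈ OGrp (BWmat BV c)) (ε : ℤˣ),
      ((m : Matrix (Fin dV ⊕ Fin 1) (Fin dV ⊕ Fin 1) F).det
        = ((ε : ℤ) : F) ^ ((dV + 1 + 1) / 2)) →
      vecAct m ε w₀ = w₀ →
      TransformsBy T (conjAct (BWmat BV c) m hm ε) ((ε : ℤ) : ℂ))
    ↔ (∀ (g : GL (Fin dV) F) (hg : g ∈ OGrp BV) (ε : ℤˣ),
      ((g : Matrix (Fin dV) (Fin dV) F).det = ((ε : ℤ) : F) ^ ((dV + 1) / 2)) →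
      TransformsBy T (conjAct (BWmat BV c) (embGL g) (embGL_og hg) ε) ((ε : ℤ) : ℂ)) := by
  
  constructor
  · intro H g hg ε hdet
    rcases Int.units_eq_one_or ε with rfl | rfl
    · refine H (embGL g) (embGL_og hg) 1 ?_ ?_
      · rw [embGL_det]
        simpa using hdet
      · simp only [vecAct, hw₀, aux_embGL_mulVec]
        simp
    · have hmneg : -(embGL g) ∈ OGrp (BWmat BV c) := aux_neg_mem_OGrp (embGL_og hg)
      have hdet' : (((-(embGL g) : GL (Fin dV ⊕ Fin 1) F)) : Matrix (Fin dV ⊕ Fin 1) (Fin dV ⊕ Fin 1) F).det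
          = (((-1 : ℤˣ) : ℤ) : F) ^ ((dV + 1 + 1) / 2) := by
        rw [Units.val_neg, det_neg, embGL_det, hdet]
        have hcard : Fintype.card (Fin dV ⊕ Fin 1) = dV + 1 := by simp
        rw [hcard]
        simp only [Units.val_neg, Units.val_one, Int.cast_neg, Int.cast_one]
        rw [← pow_add]
        exact aux_neg_one_pow_congr (by rcases Nat.even_or_odd dV with ⟨k, rfl⟩ | ⟨k, rfl⟩ <;> omega)
      have hstab' : vecAct (-(embGL g)) (-1) w₀ = w₀ := by
        simp only [vecAct, Units.val_neg, neg_mulVec, hw₀, aux_embGL_mulVec]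
        simp
      have key := H (-(embGL g)) hmneg (-1) hdet' hstab'
      rwa [aux_conjAct_neg (BWmat BV c) (Units.val_neg (embGL g)) hmneg (embGL_og hg) (-1)] at key
  · intro H m hm ε hdet hstab
    have hε2 : (((ε : ℤ)) : F) * (((ε : ℤ)) : F) = 1 := by
      rcases Int.units_eq_one_or ε with rfl | rfl <;> norm_num
    have hstab' : (m : Matrix (Fin dV ⊕ Fin 1) (Fin dV ⊕ Fin 1) F).mulVec
        (Sum.elim (fun _ => (0:F)) (fun _ => t)) = (((ε : ℤ)) : F) • Sum.elim (fun _ => (0:F)) (fun _ => t) := by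
      have h := congrArg (fun v => (((ε : ℤ)) : F) • v) hstab
      simp only [vecAct, smul_smul, hε2, one_smul] at h
      rw [← hw₀, h, hw₀]
    obtain ⟨gmat, hgO, hAeq⟩ := aux_block_decomp hc ht hε2 hm hstab'
    have hdetA22 : (((ε : ℤ) : F) • (1 : Matrix (Fin 1) (Fin 1) F)).det = ((ε : ℤ) : F) := by
      rw [det_smul]
      simp
    have hdetg : gmat.det * (((ε : ℤ)) : F) = (((ε : ℤ)) : F) ^ ((dV + 1 + 1) / 2) := by
      rw [← hdet, hAeq, det_fromBlocks_zero₂₁, hdetA22]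
    rcases Int.units_eq_one_or ε with rfl | rfl
    · simp only [Units.val_one, Int.cast_one, one_pow, mul_one, one_smul] at hdetg hAeq
      have hU : IsUnit gmat := (Matrix.isUnit_iff_isUnit_det gmat).mpr (hdetg ▸ isUnit_one)
      have hgO' : (hU.unit : GL (Fin dV) F) ∈ OGrp BV := by
        show ((hU.unit : GL (Fin dV) F) : Matrix (Fin dV) (Fin dV) F)ᵀ * BV
            * ((hU.unit : GL (Fin dV) F) : Matrix (Fin dV) (Fin dV) F) = BV
        rw [hU.unit_spec]
        exact hgO
      have hdc : (((hU.unit : GL (Fin dV) F)) : Matrix (Fin dV) (Fin dV) F).det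
          = (((1 : ℤˣ) : ℤ) : F) ^ ((dV + 1) / 2) := by
        rw [hU.unit_spec, hdetg]
        simp
      have key := H hU.unit hgO' 1 hdc
      have hmatch : ((embGL (hU.unit) : GL (Fin dV ⊕ Fin 1) F) : Matrix (Fin dV ⊕ Fin 1) (Fin dV ⊕ Fin 1) F)
          = (m : Matrix (Fin dV ⊕ Fin 1) (Fin dV ⊕ Fin 1) F) := by
        rw [embGL_coe, hU.unit_spec, hAeq]
      rwa [aux_conjAct_eq (BWmat BV c) hmatch (embGL_og hgO') hm 1] at key
    · simp only [Units.val_neg, Units.val_one, Int.cast_neg, Int.cast_one] at hdetg hAeq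
      have hdetg' : gmat.det = (-1 : F) ^ ((dV + 1 + 1) / 2 + 1) := by
        rw [pow_succ]
        linear_combination (-1 : F) * hdetg
      have hdetg2 : (-gmat).det = (-1 : F) ^ (dV + (dV + 1 + 1) / 2 + 1) := by
        rw [det_neg, hdetg', Fintype.card_fin, ← pow_add, ← add_assoc]
      have hU : IsUnit (-gmat) := (Matrix.isUnit_iff_isUnit_det (-gmat)).mpr
        (by rw [hdetg2]; exact (isUnit_one.neg).pow _)
      have hgO' : (hU.unit : GL (Fin dV) F) ∈ OGrp BV := by
        show ((hU.unit : GL (Fin dV) F) : Matrix (Fin dV) (Fin dV) F)ᵀ * BV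
            * ((hU.unit : GL (Fin dV) F) : Matrix (Fin dV) (Fin dV) F) = BV
        rw [hU.unit_spec, transpose_neg, neg_mul, neg_mul_neg]
        exact hgO
      have hdc : (((hU.unit : GL (Fin dV) F)) : Matrix (Fin dV) (Fin dV) F).det
          = (((-1 : ℤˣ) : ℤ) : F) ^ ((dV + 1) / 2) := by
        rw [hU.unit_spec, hdetg2]
        simp only [Units.val_neg, Units.val_one, Int.cast_neg, Int.cast_one]
        exact aux_neg_one_pow_congr (by rcases Nat.even_or_odd dV with ⟨k, rfl⟩ | ⟨k, rfl⟩ <;> omega)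
      have key := H hU.unit hgO' (-1) hdc
      have hmatch : ((embGL (hU.unit) : GL (Fin dV ⊕ Fin 1) F) : Matrix (Fin dV ⊕ Fin 1) (Fin dV ⊕ Fin 1) F)
          = -(m : Matrix (Fin dV ⊕ Fin 1) (Fin dV ⊕ Fin 1) F) := by
        rw [embGL_coe, hU.unit_spec, hAeq, fromBlocks_neg]
        simp
      rwa [aux_conjAct_neg (BWmat BV c) hmatch (embGL_og hgO') hm (-1)] at key
end
end

section
/- Let F^× act on F² by t·(x,y) := (tx, t^{-1}y), and let T₀ ∈ S'(F² ∖ {0}) be the distribution T₀(f) = ∫_{F^×} f(x,0) d^*x − ∫_{F^×} f(0,y) d^*y, where d^*x is a Haar measure on the multiplicative group F^×. Then there exists no F^×-invariant distribution T ∈ S'(F²) whose restriction to S(F² ∖ {0}) (embedded in S(F²) by extension by zero) equals T₀. -/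
open Matrix MeasureTheory

noncomputable section

private lemma isLocallyConstant_indicator_one {X : Type*} [TopologicalSpace X] {A : Set X}
    (h : IsClopen A) : IsLocallyConstant (A.indicator (fun _ => (1 : ℂ))) := by
  classical
  intro s
  have hpre : A.indicator (fun _ => (1 : ℂ)) ⁻¹' s =
      (if (1 : ℂ) ∈ s then A else ∅) ∪ (if (0 : ℂ) ∈ s then Aᶜ else ∅) := by
    ext x
    by_cases hx : x ∈ A <;> split_ifs <;>
      simp_all [Set.indicator_apply]
  rw [hpre]
  split_ifs <;>
    simp [h.2, h.1.isOpen_compl, IsOpen.union, isOpen_empty]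

/-- Let `F^×` act on `F²` by `t·(x,y) = (tx, t⁻¹y)`, and let
`T₀(f) = ∫_{F^×} f(x,0) d^*x − ∫_{F^×} f(0,y) d^*y` (a distribution on `F² ∖ {0}`,
`d^*x` a Haar measure on `F^×`).  Then there is no `F^×`-invariant distribution on
`F²` whose restriction to `S(F² ∖ {0})` (embedded in `S(F²)` by extension by zero)
equals `T₀`. -/
theorem no_invariant_extension_of_T0 (p : ℕ) [Fact p.Prime] (F : Type) [Field F] [TopologicalSpace F]
    [IsTopologicalRing F] [Algebra ℚ_[p] F] [FiniteDimensional ℚ_[p] F]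
    [ContinuousSMul ℚ_[p] F] [T2Space F]
    [MeasurableSpace Fˣ] [BorelSpace Fˣ]
    (μ : MeasureTheory.Measure Fˣ) [μ.IsHaarMeasure] :
    ¬ ∃ T : Distrn (F × F),
      (∀ t : Fˣ, TransformsBy T (fun v => ((t : F) * v.1, ((t⁻¹ : Fˣ) : F) * v.2)) 1) ∧
      (∀ (f : ↥(SchwartzSp {v : F × F // v ≠ 0})) (g : ↥(SchwartzSp (F × F))),
        (∀ (v : F × F) (hv : v ≠ 0), (g : F × F → ℂ) v = (f : {v : F × F // v ≠ 0} → ℂ) ⟨v, hv⟩) →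
        (g : F × F → ℂ) 0 = 0 →
        T g = (∫ x : Fˣ, (f : {v : F × F // v ≠ 0} → ℂ)
                  ⟨((x : F), 0), fun h => x.ne_zero (congrArg Prod.fst h)⟩ ∂μ)
              - ∫ y : Fˣ, (f : {v : F × F // v ≠ 0} → ℂ)
                  ⟨(0, (y : F)), fun h => y.ne_zero (congrArg Prod.snd h)⟩ ∂μ) := by
  classical
  rintro ⟨T, hinv, hres⟩
  -- basic numerics
  have hpprime : p.Prime := Fact.out
  have hppos : (0 : ℝ) < (p : ℝ) := by exact_mod_cast hpprime.pos
  have hpne : (p : ℝ) ≠ 0 := hppos.ne'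
  have hp1 : (1 : ℝ) < (p : ℝ) := by exact_mod_cast hpprime.one_lt
  have hpinvne : ((p : ℝ)⁻¹ : ℝ) ≠ 0 := inv_ne_zero hpne
  have hpinvle : ((p : ℝ)⁻¹ : ℝ) ≤ 1 := by
    rw [inv_le_one_iff₀]; right; exact hp1.le
  -- basis and coordinates
  set n := Module.finrank ℚ_[p] F with hn
  have : 0 < n := Module.finrank_pos
  haveI : Nonempty (Fin n) := ⟨⟨0, this⟩⟩
  set b : Module.Basis (Fin n) ℚ_[p] F := Module.finBasis ℚ_[p] F with hb
  set e := b.equivFunL with he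
  -- the family of "balls"
  set Ur : ℝ → Set F :=
    fun r => ⇑e ⁻¹' Set.pi Set.univ (fun _ : Fin n => Metric.closedBall (0 : ℚ_[p]) r) with hUr
  have hmem : ∀ (r : ℝ) (x : F), x ∈ Ur r ↔ ∀ i, ‖e x i‖ ≤ r := by
    intro r x
    simp [hUr, Set.mem_pi, mem_closedBall_zero_iff]
  have hopen : ∀ r : ℝ, r ≠ 0 → IsOpen (Ur r) := fun r hr =>
    (isOpen_set_pi Set.finite_univ fun _ _ => IsUltrametricDist.isOpen_closedBall _ hr).preimage
      e.continuous
  have hclosed : ∀ r : ℝ, IsClosed (Ur r) := fun r =>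
    (isClosed_set_pi fun _ _ => Metric.isClosed_closedBall).preimage e.continuous
  have hcompact : ∀ r : ℝ, IsCompact (Ur r) := by
    intro r
    have h1 : IsCompact (Set.pi Set.univ fun _ : Fin n => Metric.closedBall (0 : ℚ_[p]) r) :=
      isCompact_univ_pi fun _ => isCompact_closedBall _ _
    have h2 : Ur r = ⇑e.symm '' (Set.pi Set.univ fun _ : Fin n => Metric.closedBall (0 : ℚ_[p]) r) := by
      ext x
      constructor
      · intro hx
        exact ⟨e x, hx, e.symm_apply_apply x⟩
      · rintro ⟨y, hy, rfl⟩
        simpa [hUr, e.apply_symm_apply] using hy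
    rw [h2]
    exact h1.image e.symm.continuous
  have hmono : ∀ {r s : ℝ}, r ≤ s → Ur r ⊆ Ur s := by
    intro r s hrs x hx
    rw [hmem] at hx ⊢
    exact fun i => (hx i).trans hrs
  have h0mem : ∀ r : ℝ, 0 ≤ r → (0 : F) ∈ Ur r := by
    intro r hr
    rw [hmem]
    intro i
    simp [hr]
  -- the scaling element
  set tF : F := algebraMap ℚ_[p] F (p : ℚ_[p]) with htFdef
  have hpQ : ((p : ℚ_[p])) ≠ 0 := by
    exact_mod_cast hpprime.ne_zero
  have htF : tF ≠ 0 := by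
    rw [htFdef]
    simpa using (map_ne_zero (algebraMap ℚ_[p] F)).mpr hpQ
  have hscale : ∀ (r : ℝ) (x : F), tF * x ∈ Ur r ↔ x ∈ Ur ((p : ℝ) * r) := by
    intro r x
    have h1 : tF * x = (p : ℚ_[p]) • x := (Algebra.smul_def _ _).symm
    rw [hmem, hmem, h1]
    have h2 : ∀ i, e ((p : ℚ_[p]) • x) i = (p : ℚ_[p]) * e x i := by
      intro i
      rw [e.map_smul]
      simp
    constructor
    · intro h i
      have h3 := h i
      rw [h2 i, norm_mul, Padic.norm_p] at h3
      exact (inv_mul_le_iff₀ hppos).1 h3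
    · intro h i
      rw [h2 i, norm_mul, Padic.norm_p]
      exact (inv_mul_le_iff₀ hppos).2 (h i)
  have s2 : ∀ x : F, tF * x ∈ Ur 1 ↔ x ∈ Ur (p : ℝ) := by
    intro x; rw [hscale, mul_one]
  have s1 : ∀ x : F, tF * x ∈ Ur ((p : ℝ)⁻¹) ↔ x ∈ Ur 1 := by
    intro x; rw [hscale, mul_inv_cancel₀ hpne]
  have s1' : ∀ y : F, tF⁻¹ * y ∈ Ur 1 ↔ y ∈ Ur ((p : ℝ)⁻¹) := by
    intro y
    conv_rhs => rw [← mul_inv_cancel_left₀ htF y]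
    rw [s1]
  -- a point in `Ur 1 \ Ur p⁻¹`
  obtain ⟨u0, hu0mem, hu0not⟩ : ∃ u0 : F, u0 ∈ Ur 1 ∧ u0 ∉ Ur ((p : ℝ)⁻¹) := by
    refine ⟨e.symm (fun _ => 1), ?_, ?_⟩
    · rw [hmem]
      intro i
      rw [e.apply_symm_apply]
      simp
    · rw [hmem]
      push_neg
      obtain ⟨i⟩ := ‹Nonempty (Fin n)›
      refine ⟨i, ?_⟩
      rw [e.apply_symm_apply]
      simpa using inv_lt_one_of_one_lt₀ hp1
  -- Schwartz functions
  have hclopen : ∀ r : ℝ, r ≠ 0 → IsClopen (Ur r) := fun r hr => ⟨hclosed r, hopen r hr⟩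
  have mkmem : ∀ (r s : ℝ), r ≠ 0 → s ≠ 0 →
      (Set.indicator ((Ur r) ×ˢ (Ur s)) (fun _ => (1 : ℂ))) ∈ SchwartzSp (F × F) := by
    intro r s hr hs
    constructor
    · exact isLocallyConstant_indicator_one
        ⟨(hclosed r).prod (hclosed s), (hopen r hr).prod (hopen s hs)⟩
    · exact HasCompactSupport.intro ((hcompact r).prod (hcompact s))
        (fun x hx => Set.indicator_of_notMem hx _)
  set φS : ↥(SchwartzSp (F × F)) :=
    ⟨Set.indicator ((Ur 1) ×ˢ (Ur 1)) (fun _ => (1 : ℂ)), mkmem 1 1 one_ne_zero one_ne_zero⟩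
    with hφS
  set gS : ↥(SchwartzSp (F × F)) :=
    ⟨Set.indicator ((Ur (p : ℝ)) ×ˢ (Ur ((p : ℝ)⁻¹))) (fun _ => (1 : ℂ)),
      mkmem _ _ hpne hpinvne⟩ with hgS
  set hS : ↥(SchwartzSp (F × F)) := gS - φS with hhS
  have hSval : ∀ v : F × F, (hS : F × F → ℂ) v =
      Set.indicator ((Ur (p : ℝ)) ×ˢ (Ur ((p : ℝ)⁻¹))) (fun _ => (1 : ℂ)) v -
      Set.indicator ((Ur 1) ×ˢ (Ur 1)) (fun _ => (1 : ℂ)) v := fun v => rfl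
  -- invariance gives T hS = 0
  set tu : Fˣ := Units.mk0 tF htF with htu
  have htuval : ((tu : F)) = tF := rfl
  have htuinv : (((tu⁻¹ : Fˣ)) : F) = tF⁻¹ := by
    rw [Units.val_inv_eq_inv_val, htuval]
  have hTgφ : T gS = T φS := by
    have h := hinv tu φS gS ?_
    · rw [one_mul] at h; exact h
    · intro v
      have hmemiff : ((tu : F) * v.1, ((tu⁻¹ : Fˣ) : F) * v.2) ∈ (Ur 1) ×ˢ (Ur 1) ↔
          v ∈ (Ur (p : ℝ)) ×ˢ (Ur ((p : ℝ)⁻¹)) := by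
        rw [htuval, htuinv, Set.mem_prod, Set.mem_prod, s2, s1']
      show Set.indicator ((Ur (p : ℝ)) ×ˢ (Ur ((p : ℝ)⁻¹))) (fun _ => (1 : ℂ)) v =
        Set.indicator ((Ur 1) ×ˢ (Ur 1)) (fun _ => (1 : ℂ)) _
      by_cases hv : v ∈ (Ur (p : ℝ)) ×ˢ (Ur ((p : ℝ)⁻¹))
      · rw [Set.indicator_of_mem hv, Set.indicator_of_mem (hmemiff.2 hv)]
      · rw [Set.indicator_of_notMem hv,
          Set.indicator_of_notMem (fun h' => hv (hmemiff.1 h'))]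
  have hT0 : T hS = 0 := by
    rw [hhS, map_sub, hTgφ, sub_self]
  -- vanishing near 0 and outside a compact set
  have hvanish : ∀ v ∈ (Ur 1) ×ˢ (Ur ((p : ℝ)⁻¹)), (hS : F × F → ℂ) v = 0 := by
    rintro ⟨x, y⟩ ⟨hx, hy⟩
    have h1 : ((x, y) : F × F) ∈ (Ur (p : ℝ)) ×ˢ (Ur ((p : ℝ)⁻¹)) := ⟨hmono hp1.le hx, hy⟩
    have h2 : ((x, y) : F × F) ∈ (Ur 1) ×ˢ (Ur 1) := ⟨hx, hmono hpinvle hy⟩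
    rw [hSval, Set.indicator_of_mem h1, Set.indicator_of_mem h2, sub_self]
  have hout : ∀ v, v ∉ (Ur (p : ℝ)) ×ˢ (Ur 1) → (hS : F × F → ℂ) v = 0 := by
    intro v hv
    have h1 : v ∉ (Ur (p : ℝ)) ×ˢ (Ur ((p : ℝ)⁻¹)) := fun h => hv ⟨h.1, hmono hpinvle h.2⟩
    have h2 : v ∉ (Ur 1) ×ˢ (Ur 1) := fun h => hv ⟨hmono hp1.le h.1, h.2⟩
    rw [hSval, Set.indicator_of_notMem h1, Set.indicator_of_notMem h2, sub_self]
  have h0V : (0 : F × F) ∈ (Ur 1) ×ˢ (Ur ((p : ℝ)⁻¹)) :=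
    ⟨h0mem 1 one_pos.le, h0mem _ (by positivity)⟩
  -- restriction of hS to the punctured plane
  set K₀ : Set (F × F) := ((Ur (p : ℝ)) ×ˢ (Ur 1)) \ ((Ur 1) ×ˢ (Ur ((p : ℝ)⁻¹))) with hK₀
  have hK₀c : IsCompact K₀ :=
    ((hcompact _).prod (hcompact _)).diff ((hopen 1 one_ne_zero).prod (hopen _ hpinvne))
  have hK₀ne : ∀ v ∈ K₀, v ≠ (0 : F × F) := fun v hv h0 => hv.2 (h0 ▸ h0V)
  have hf₀mem : (fun v : {v : F × F // v ≠ 0} => (hS : F × F → ℂ) v.1) ∈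
      SchwartzSp {v : F × F // v ≠ 0} := by
    constructor
    · exact (hS.2.1).comp_continuous continuous_subtype_val
    · apply HasCompactSupport.intro (K := Subtype.val ⁻¹' K₀)
      · rw [Subtype.isCompact_iff]
        have himg : (Subtype.val '' (Subtype.val ⁻¹' K₀ : Set {v : F × F // v ≠ 0})) = K₀ := by
          rw [Set.image_preimage_eq_inter_range, Subtype.range_coe_subtype]
          exact Set.inter_eq_self_of_subset_left (fun v hv => hK₀ne v hv)
        rw [himg]
        exact hK₀c
      · intro v hv
        by_cases hU : v.1 ∈ (Ur (p : ℝ)) ×ˢ (Ur 1)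
        · have : v.1 ∈ (Ur 1) ×ˢ (Ur ((p : ℝ)⁻¹)) := by
            by_contra hcon
            exact hv ⟨hU, hcon⟩
          exact hvanish v.1 this
        · exact hout v.1 hU
  set f₀ : ↥(SchwartzSp {v : F × F // v ≠ 0}) :=
    ⟨fun v => (hS : F × F → ℂ) v.1, hf₀mem⟩ with hf₀
  have hres' := hres f₀ hS (fun v hv => rfl) (hvanish 0 h0V)
  -- identify the two integrands as indicator functions
  set A₁ : Set Fˣ := Units.val ⁻¹' (Ur (p : ℝ) \ Ur 1) with hA₁
  set B : Set Fˣ := Units.val ⁻¹' (Ur 1 \ Ur ((p : ℝ)⁻¹)) with hB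
  have hAopen : IsOpen A₁ :=
    (((hopen _ hpne).sdiff (hclosed 1))).preimage Units.continuous_val
  have hBopen : IsOpen B :=
    (((hopen 1 one_ne_zero).sdiff (hclosed _))).preimage Units.continuous_val
  have hint1 : (fun x : Fˣ => (f₀ : {v : F × F // v ≠ 0} → ℂ)
      ⟨((x : F), 0), fun h => x.ne_zero (congrArg Prod.fst h)⟩) =
      A₁.indicator (fun _ => (1 : ℂ)) := by
    funext x
    show (hS : F × F → ℂ) ((x : F), 0) = _
    rw [hSval]
    by_cases h2 : (x : F) ∈ Ur 1
    · have h3 : (x : F) ∈ Ur (p : ℝ) := hmono hp1.le h2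
      have m1 : (((x : F), (0 : F)) : F × F) ∈ (Ur (p : ℝ)) ×ˢ (Ur ((p : ℝ)⁻¹)) :=
        ⟨h3, h0mem _ (by positivity)⟩
      have m2 : (((x : F), (0 : F)) : F × F) ∈ (Ur 1) ×ˢ (Ur 1) := ⟨h2, h0mem 1 one_pos.le⟩
      have hxA : x ∉ A₁ := fun hc => hc.2 h2
      rw [Set.indicator_of_mem m1, Set.indicator_of_mem m2,
        Set.indicator_of_notMem hxA, sub_self]
    · by_cases h3 : (x : F) ∈ Ur (p : ℝ)
      · have m1 : (((x : F), (0 : F)) : F × F) ∈ (Ur (p : ℝ)) ×ˢ (Ur ((p : ℝ)⁻¹)) :=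
          ⟨h3, h0mem _ (by positivity)⟩
        have m2 : (((x : F), (0 : F)) : F × F) ∉ (Ur 1) ×ˢ (Ur 1) := fun hc => h2 hc.1
        have hxA : x ∈ A₁ := ⟨h3, h2⟩
        rw [Set.indicator_of_mem m1, Set.indicator_of_notMem m2,
          Set.indicator_of_mem hxA, sub_zero]
      · have m1 : (((x : F), (0 : F)) : F × F) ∉ (Ur (p : ℝ)) ×ˢ (Ur ((p : ℝ)⁻¹)) :=
          fun hc => h3 hc.1
        have m2 : (((x : F), (0 : F)) : F × F) ∉ (Ur 1) ×ˢ (Ur 1) := fun hc => h2 hc.1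
        have hxA : x ∉ A₁ := fun hc => h3 hc.1
        rw [Set.indicator_of_notMem m1, Set.indicator_of_notMem m2,
          Set.indicator_of_notMem hxA, sub_self]
  have hint2 : (fun y : Fˣ => (f₀ : {v : F × F // v ≠ 0} → ℂ)
      ⟨(0, (y : F)), fun h => y.ne_zero (congrArg Prod.snd h)⟩) =
      fun y => - B.indicator (fun _ => (1 : ℂ)) y := by
    funext y
    show (hS : F × F → ℂ) (0, (y : F)) = _
    rw [hSval]
    have h0p : (0 : F) ∈ Ur (p : ℝ) := h0mem _ hppos.le
    have h01 : (0 : F) ∈ Ur 1 := h0mem 1 one_pos.le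
    by_cases h2 : (y : F) ∈ Ur ((p : ℝ)⁻¹)
    · have h3 : (y : F) ∈ Ur 1 := hmono hpinvle h2
      have m1 : (((0 : F), (y : F)) : F × F) ∈ (Ur (p : ℝ)) ×ˢ (Ur ((p : ℝ)⁻¹)) := ⟨h0p, h2⟩
      have m2 : (((0 : F), (y : F)) : F × F) ∈ (Ur 1) ×ˢ (Ur 1) := ⟨h01, h3⟩
      have hyB : y ∉ B := fun hc => hc.2 h2
      rw [Set.indicator_of_mem m1, Set.indicator_of_mem m2,
        Set.indicator_of_notMem hyB, sub_self, neg_zero]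
    · by_cases h3 : (y : F) ∈ Ur 1
      · have m1 : (((0 : F), (y : F)) : F × F) ∉ (Ur (p : ℝ)) ×ˢ (Ur ((p : ℝ)⁻¹)) :=
          fun hc => h2 hc.2
        have m2 : (((0 : F), (y : F)) : F × F) ∈ (Ur 1) ×ˢ (Ur 1) := ⟨h01, h3⟩
        have hyB : y ∈ B := ⟨h3, h2⟩
        rw [Set.indicator_of_notMem m1, Set.indicator_of_mem m2,
          Set.indicator_of_mem hyB, zero_sub]
      · have m1 : (((0 : F), (y : F)) : F × F) ∉ (Ur (p : ℝ)) ×ˢ (Ur ((p : ℝ)⁻¹)) :=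
          fun hc => h2 hc.2
        have m2 : (((0 : F), (y : F)) : F × F) ∉ (Ur 1) ×ˢ (Ur 1) := fun hc => h3 hc.2
        have hyB : y ∉ B := fun hc => h3 hc.1
        rw [Set.indicator_of_notMem m1, Set.indicator_of_notMem m2,
          Set.indicator_of_notMem hyB, sub_self, neg_zero]
  -- the two measures agree
  have hμeq : μ A₁ = μ B := by
    have hAB : A₁ = (fun x : Fˣ => tu * x) ⁻¹' B := by
      ext x
      show (x : F) ∈ Ur (p : ℝ) \ Ur 1 ↔ ((tu * x : Fˣ) : F) ∈ Ur 1 \ Ur ((p : ℝ)⁻¹)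
      rw [Units.val_mul, htuval]
      constructor
      · rintro ⟨h1, h2⟩
        exact ⟨(s2 _).2 h1, fun hc => h2 ((s1 _).1 hc)⟩
      · rintro ⟨h1, h2⟩
        exact ⟨(s2 _).1 h1, fun hc => h2 ((s1 _).2 hc)⟩
    rw [hAB, measure_preimage_mul]
  -- compactness of B, via continuity of inversion
  set Alin : F →ₗ[ℚ_[p]] Matrix (Fin n) (Fin n) ℚ_[p] :=
    (LinearMap.toMatrix b b).toLinearMap ∘ₗ (Algebra.lmul ℚ_[p] F).toLinearMap with hAlin
  have hAcont : Continuous Alin := Alin.continuous_of_finiteDimensional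
  have hAapp : ∀ x : F, Alin x = LinearMap.toMatrix b b (Algebra.lmul ℚ_[p] F x) := fun x => rfl
  have hAone : Alin 1 = 1 := by
    rw [hAapp, _root_.map_one, ← LinearMap.toMatrix_id (v₁ := b)]
    rfl
  have hAmul : ∀ x y : F, Alin x * Alin y = Alin (x * y) := by
    intro x y
    rw [hAapp, hAapp, hAapp, _root_.map_mul, LinearMap.toMatrix_mul]
  have hAunit : ∀ x : F, x ≠ 0 → Alin x * Alin x⁻¹ = 1 := by
    intro x hx
    rw [hAmul, mul_inv_cancel₀ hx, hAone]
  have hAdet : ∀ x : F, x ≠ 0 → (Alin x).det ≠ 0 := by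
    intro x hx
    have h1 : IsUnit (Alin x) :=
      ⟨⟨Alin x, Alin x⁻¹, hAunit x hx, by rw [hAmul, inv_mul_cancel₀ hx, hAone]⟩, rfl⟩
    exact (((Matrix.isUnit_iff_isUnit_det _).1 h1)).ne_zero
  have hAinv : ∀ x : F, x ≠ 0 → (Alin x)⁻¹ = Alin x⁻¹ := fun x hx =>
    Matrix.inv_eq_right_inv (hAunit x hx)
  set invF : F → F := fun x => e.symm ((Alin x)⁻¹.mulVec (e 1)) with hinvFdef
  have hinvF : ∀ x : F, x ≠ 0 → invF x = x⁻¹ := by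
    intro x hx
    rw [hinvFdef]
    show e.symm ((Alin x)⁻¹.mulVec (e 1)) = x⁻¹
    rw [hAinv x hx, hAapp]
    have hcoords : (e : F → Fin n → ℚ_[p]) (1 : F) = ⇑(b.repr 1) := by
      rw [he]
      show b.equivFun 1 = _
      rw [Module.Basis.equivFun_apply]
    rw [hcoords, LinearMap.toMatrix_mulVec_repr]
    have : (Algebra.lmul ℚ_[p] F x⁻¹) 1 = x⁻¹ := by
      simp [Algebra.lmul]
    rw [this]
    exact b.equivFunL_symm_apply_repr x⁻¹
  have hinvcont : ContinuousOn invF {x : F | x ≠ 0} := by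
    have h1 : ContinuousOn (fun x : F => ((Alin x).det)⁻¹ • (Alin x).adjugate)
        {x : F | x ≠ 0} :=
      ((hAcont.matrix_det.continuousOn).inv₀ fun x hx => hAdet x hx).smul
        (hAcont.matrix_adjugate.continuousOn)
    have h2 : Set.EqOn (fun x : F => (Alin x)⁻¹)
        (fun x : F => ((Alin x).det)⁻¹ • (Alin x).adjugate) {x : F | x ≠ 0} := by
      intro x _
      show (Alin x)⁻¹ = ((Alin x).det)⁻¹ • (Alin x).adjugate
      rw [Matrix.inv_def, Ring.inverse_eq_inv]
    have h3 : Continuous fun M : Matrix (Fin n) (Fin n) ℚ_[p] => e.symm (M.mulVec (e 1)) :=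
      e.symm.continuous.comp (continuous_id.matrix_mulVec continuous_const)
    exact h3.comp_continuousOn (h1.congr h2)
  have hKne0 : ∀ x ∈ Ur 1 \ Ur ((p : ℝ)⁻¹), x ≠ (0 : F) := by
    intro x hx h0
    exact hx.2 (h0 ▸ h0mem _ (by positivity))
  have hBcomp : IsCompact B := by
    rw [Units.isEmbedding_embedProduct.isCompact_iff]
    have himg : Units.embedProduct F '' B =
        (fun x : F => (x, MulOpposite.op (invF x))) '' (Ur 1 \ Ur ((p : ℝ)⁻¹)) := by
      ext w
      constructor
      · rintro ⟨u, hu, rfl⟩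
        refine ⟨(u : F), hu, ?_⟩
        have huinv : invF (u : F) = ((u⁻¹ : Fˣ) : F) := by
          rw [hinvF _ u.ne_zero, Units.val_inv_eq_inv_val]
        show ((u : F), MulOpposite.op (invF (u : F))) = Units.embedProduct F u
        rw [huinv]
        rfl
      · rintro ⟨x, hx, rfl⟩
        refine ⟨Units.mk0 x (hKne0 x hx), hx, ?_⟩
        have hxinv : invF x = ((( Units.mk0 x (hKne0 x hx))⁻¹ : Fˣ) : F) := by
          rw [hinvF _ (hKne0 x hx), Units.val_inv_eq_inv_val]
          rfl
        show Units.embedProduct F (Units.mk0 x (hKne0 x hx)) = (x, MulOpposite.op (invF x))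
        rw [hxinv]
        rfl
    rw [himg]
    exact ((hcompact 1).diff (hopen _ hpinvne)).image_of_continuousOn
      (continuousOn_id.prodMk
        (MulOpposite.continuous_op.comp_continuousOn (hinvcont.mono fun x hx => hKne0 x hx)))
  -- B has positive finite measure
  have hBne : B.Nonempty := ⟨Units.mk0 u0 (hKne0 u0 ⟨hu0mem, hu0not⟩), ⟨hu0mem, hu0not⟩⟩
  have hμB0 : μ B ≠ 0 := (hBopen.measure_pos μ hBne).ne'
  have hμBtop : μ B ≠ ⊤ := hBcomp.measure_lt_top.ne
  have hval : ((μ B).toReal : ℂ) ≠ 0 := by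
    have : (μ B).toReal ≠ 0 := ENNReal.toReal_ne_zero.2 ⟨hμB0, hμBtop⟩
    exact_mod_cast this
  -- final contradiction
  rw [hT0, hint1, hint2] at hres'
  rw [integral_indicator_const (1 : ℂ) hAopen.measurableSet] at hres'
  rw [integral_neg, integral_indicator_const (1 : ℂ) hBopen.measurableSet] at hres'
  rw [measureReal_def, measureReal_def, hμeq] at hres'
  apply hval
  have h2 : ((μ B).toReal : ℂ) + ((μ B).toReal : ℂ) = 0 := by
    rw [Complex.real_smul, mul_one] at hres'
    linear_combination -hres'
  exact add_self_eq_zero.mp h2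
end
end

section
/- Let d ≥ 2 with d ≡ 2 mod 4, and let V = F^d with basis (e_i)_{i=1,…,d/2} ∪ (f_i)_{i=1,…,d/2}, where each subfamily spans a totally isotropic subspace and <e_i, f_j> = (−1)^i δ_{i, d/2+1−j}. Let X ∈ End(V) satisfy X e_i = e_{i−1}, X f_i = f_{i−1} for i ≥ 2 and X e_1 = X f_1 = 0. Set V⁺ := span{e_i + f_i : 1 ≤ i ≤ d/2} and V⁻ := span{e_i − f_i : 1 ≤ i ≤ d/2}. Then V = V⁺ ⊕ V⁻, V⁺ and V⁻ are orthogonal to each other, both are X-stable, the restriction of <.,.> to each is nondegenerate with <e_i ± f_i, e_j ± f_j> = ±2(−1)^i δ_{i, d/2+1−j}, and X acts on each of V⁺, V⁻ (in the bases (e_i + f_i)_i, resp. (e_i − f_i)_i) as a single nilpotent Jordan block of odd size d/2. -/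
open Matrix

/-- The vector `e_i + f_i` in `V = (Fin m ⊕ Fin m) → F`. -/
def sumVec (F : Type) [Field F] (m : ℕ) (i : Fin m) : (Fin m ⊕ Fin m) → F :=
  Pi.single (Sum.inl i) 1 + Pi.single (Sum.inr i) 1

/-- The vector `e_i − f_i` in `V = (Fin m ⊕ Fin m) → F`. -/
def diffVec (F : Type) [Field F] (m : ℕ) (i : Fin m) : (Fin m ⊕ Fin m) → F :=
  Pi.single (Sum.inl i) 1 - Pi.single (Sum.inr i) 1

/-- Let `d ≡ 2 mod 4` and `V = F^d` with basis `(e_i) ∪ (f_i)` (`1 ≤ i ≤ d/2`; here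
`V = (Fin (d/2) ⊕ Fin (d/2)) → F`), each subfamily spanning a totally isotropic subspace,
`<e_i, f_j> = (−1)^i δ_{i, d/2+1−j}`, and `X e_i = e_{i−1}`, `X f_i = f_{i−1}`,
`X e_1 = X f_1 = 0`.  Set `V⁺ = span{e_i + f_i}`, `V⁻ = span{e_i − f_i}`.  Then
`V = V⁺ ⊕ V⁻`, the two summands are orthogonal and `X`-stable, the restricted forms are
nondegenerate with `<e_i ± f_i, e_j ± f_j> = ±2(−1)^i δ_{i, d/2+1−j}`, and `X` acts on
each summand (in the bases `(e_i + f_i)`, resp. `(e_i − f_i)`) as a single nilpotent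
Jordan block of odd size `d/2`. -/
theorem split_into_two_odd_jordan_blocks (p : ℕ) [Fact p.Prime] (F : Type) [Field F] [Algebra ℚ_[p] F]
    [FiniteDimensional ℚ_[p] F]
    (d : ℕ) (hd : 2 ≤ d) (hd4 : d % 4 = 2)
    (B : Matrix (Fin (d / 2) ⊕ Fin (d / 2)) (Fin (d / 2) ⊕ Fin (d / 2)) F)
    (hBee : ∀ i j : Fin (d / 2), B (Sum.inl i) (Sum.inl j) = 0)
    (hBff : ∀ i j : Fin (d / 2), B (Sum.inr i) (Sum.inr j) = 0)
    (hBef : ∀ i j : Fin (d / 2), B (Sum.inl i) (Sum.inr j)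
      = if (i : ℕ) + (j : ℕ) + 2 = d / 2 + 1 then (-1 : F) ^ ((i : ℕ) + 1) else 0)
    (hBfe : ∀ i j : Fin (d / 2), B (Sum.inr i) (Sum.inl j)
      = if (j : ℕ) + (i : ℕ) + 2 = d / 2 + 1 then (-1 : F) ^ ((j : ℕ) + 1) else 0)
    (X : Matrix (Fin (d / 2) ⊕ Fin (d / 2)) (Fin (d / 2) ⊕ Fin (d / 2)) F)
    (hXee : ∀ i j : Fin (d / 2), X (Sum.inl i) (Sum.inl j)
      = if (i : ℕ) + 1 = (j : ℕ) then 1 else 0)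
    (hXff : ∀ i j : Fin (d / 2), X (Sum.inr i) (Sum.inr j)
      = if (i : ℕ) + 1 = (j : ℕ) then 1 else 0)
    (hXef : ∀ i j : Fin (d / 2), X (Sum.inl i) (Sum.inr j) = 0)
    (hXfe : ∀ i j : Fin (d / 2), X (Sum.inr i) (Sum.inl j) = 0) :
    IsCompl (Submodule.span F (Set.range (sumVec F (d / 2))))
        (Submodule.span F (Set.range (diffVec F (d / 2)))) ∧
    (∀ v ∈ Submodule.span F (Set.range (sumVec F (d / 2))),
      ∀ w ∈ Submodule.span F (Set.range (diffVec F (d / 2))), v ⬝ᵥ B.mulVec w = 0) ∧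
    (∀ v ∈ Submodule.span F (Set.range (sumVec F (d / 2))),
      X.mulVec v ∈ Submodule.span F (Set.range (sumVec F (d / 2)))) ∧
    (∀ v ∈ Submodule.span F (Set.range (diffVec F (d / 2))),
      X.mulVec v ∈ Submodule.span F (Set.range (diffVec F (d / 2)))) ∧
    (∀ i j : Fin (d / 2), sumVec F (d / 2) i ⬝ᵥ B.mulVec (sumVec F (d / 2) j)
      = if (i : ℕ) + (j : ℕ) + 2 = d / 2 + 1 then 2 * (-1 : F) ^ ((i : ℕ) + 1) else 0) ∧
    (∀ i j : Fin (d / 2), diffVec F (d / 2) i ⬝ᵥ B.mulVec (diffVec F (d / 2) j)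
      = if (i : ℕ) + (j : ℕ) + 2 = d / 2 + 1 then -(2 * (-1 : F) ^ ((i : ℕ) + 1)) else 0) ∧
    (∀ v ∈ Submodule.span F (Set.range (sumVec F (d / 2))),
      (∀ w ∈ Submodule.span F (Set.range (sumVec F (d / 2))), v ⬝ᵥ B.mulVec w = 0) → v = 0) ∧
    (∀ v ∈ Submodule.span F (Set.range (diffVec F (d / 2))),
      (∀ w ∈ Submodule.span F (Set.range (diffVec F (d / 2))), v ⬝ᵥ B.mulVec w = 0) → v = 0) ∧
    Odd (d / 2) ∧
    (∀ k : Fin (d / 2), X.mulVec (sumVec F (d / 2) k)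
      = if hk : (k : ℕ) = 0 then 0
        else sumVec F (d / 2) ⟨(k : ℕ) - 1, lt_of_le_of_lt (Nat.sub_le _ _) k.isLt⟩) ∧
    (∀ k : Fin (d / 2), X.mulVec (diffVec F (d / 2) k)
      = if hk : (k : ℕ) = 0 then 0
        else diffVec F (d / 2) ⟨(k : ℕ) - 1, lt_of_le_of_lt (Nat.sub_le _ _) k.isLt⟩) := by
  have hchar : CharZero F := charZero_of_injective_algebraMap (algebraMap ℚ_[p] F).injective
  have hmodd : d / 2 % 2 = 1 := by omega
  have hmpos : 0 < d / 2 := by omega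
  have two_ne : (2 : F) ≠ 0 := two_ne_zero
  have hpar : ∀ i j : ℕ, i + j + 2 = d / 2 + 1 → (-1 : F) ^ (j + 1) = (-1 : F) ^ (i + 1) := by
    intro i j h
    rw [neg_one_pow_eq_pow_mod_two, neg_one_pow_eq_pow_mod_two (n := i + 1)]
    congr 1
    omega
  have hBs : ∀ j : Fin (d / 2), B.mulVec (sumVec F (d / 2) j) =
      Sum.elim
        (fun i : Fin (d / 2) => if (i : ℕ) + (j : ℕ) + 2 = d / 2 + 1 then (-1 : F) ^ ((i : ℕ) + 1) else 0)
        (fun i : Fin (d / 2) => if (j : ℕ) + (i : ℕ) + 2 = d / 2 + 1 then (-1 : F) ^ ((j : ℕ) + 1) else 0) := by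
    intro j
    funext a
    cases a with
    | inl i =>
      simp only [sumVec, Matrix.mulVec_add, Matrix.mulVec_single_one, Matrix.col_apply, Pi.add_apply, Sum.elim_inl]
      rw [hBee, hBef]; ring
    | inr i =>
      simp only [sumVec, Matrix.mulVec_add, Matrix.mulVec_single_one, Matrix.col_apply, Pi.add_apply, Sum.elim_inr]
      rw [hBfe, hBff]; ring
  have hBd : ∀ j : Fin (d / 2), B.mulVec (diffVec F (d / 2) j) =
      Sum.elim
        (fun i : Fin (d / 2) => -(if (i : ℕ) + (j : ℕ) + 2 = d / 2 + 1 then (-1 : F) ^ ((i : ℕ) + 1) else 0))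
        (fun i : Fin (d / 2) => if (j : ℕ) + (i : ℕ) + 2 = d / 2 + 1 then (-1 : F) ^ ((j : ℕ) + 1) else 0) := by
    intro j
    funext a
    cases a with
    | inl i =>
      simp only [diffVec, Matrix.mulVec_sub, Matrix.mulVec_single_one, Matrix.col_apply, Pi.sub_apply, Sum.elim_inl]
      rw [hBee, hBef]; ring
    | inr i =>
      simp only [diffVec, Matrix.mulVec_sub, Matrix.mulVec_single_one, Matrix.col_apply, Pi.sub_apply, Sum.elim_inr]
      rw [hBfe, hBff]; ring
  have hsdot : ∀ (i : Fin (d / 2)) (u : (Fin (d / 2) ⊕ Fin (d / 2)) → F),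
      sumVec F (d / 2) i ⬝ᵥ u = u (Sum.inl i) + u (Sum.inr i) := by
    intro i u; simp [sumVec, add_dotProduct, single_dotProduct]
  have hddot : ∀ (i : Fin (d / 2)) (u : (Fin (d / 2) ⊕ Fin (d / 2)) → F),
      diffVec F (d / 2) i ⬝ᵥ u = u (Sum.inl i) - u (Sum.inr i) := by
    intro i u; simp [diffVec, sub_dotProduct, single_dotProduct]
  have gram_ss : ∀ i j : Fin (d / 2), sumVec F (d / 2) i ⬝ᵥ B.mulVec (sumVec F (d / 2) j)
      = if (i : ℕ) + (j : ℕ) + 2 = d / 2 + 1 then 2 * (-1 : F) ^ ((i : ℕ) + 1) else 0 := by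
    intro i j
    rw [hsdot, hBs]
    simp only [Sum.elim_inl, Sum.elim_inr]
    by_cases h : (i : ℕ) + (j : ℕ) + 2 = d / 2 + 1
    · rw [if_pos h, if_pos (by omega : (j : ℕ) + (i : ℕ) + 2 = d / 2 + 1), if_pos h,
        hpar (i : ℕ) (j : ℕ) h]
      ring
    · rw [if_neg h, if_neg (by omega : ¬((j : ℕ) + (i : ℕ) + 2 = d / 2 + 1)), if_neg h, add_zero]
  have gram_dd : ∀ i j : Fin (d / 2), diffVec F (d / 2) i ⬝ᵥ B.mulVec (diffVec F (d / 2) j)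
      = if (i : ℕ) + (j : ℕ) + 2 = d / 2 + 1 then -(2 * (-1 : F) ^ ((i : ℕ) + 1)) else 0 := by
    intro i j
    rw [hddot, hBd]
    simp only [Sum.elim_inl, Sum.elim_inr]
    by_cases h : (i : ℕ) + (j : ℕ) + 2 = d / 2 + 1
    · rw [if_pos h, if_pos (by omega : (j : ℕ) + (i : ℕ) + 2 = d / 2 + 1), if_pos h,
        hpar (i : ℕ) (j : ℕ) h]
      ring
    · rw [if_neg h, if_neg (by omega : ¬((j : ℕ) + (i : ℕ) + 2 = d / 2 + 1)), if_neg h]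
      ring
  have gram_sd : ∀ i j : Fin (d / 2), sumVec F (d / 2) i ⬝ᵥ B.mulVec (diffVec F (d / 2) j) = 0 := by
    intro i j
    rw [hsdot, hBd]
    simp only [Sum.elim_inl, Sum.elim_inr]
    by_cases h : (i : ℕ) + (j : ℕ) + 2 = d / 2 + 1
    · rw [if_pos h, if_pos (by omega : (j : ℕ) + (i : ℕ) + 2 = d / 2 + 1),
        hpar (i : ℕ) (j : ℕ) h]
      ring
    · rw [if_neg h, if_neg (by omega : ¬((j : ℕ) + (i : ℕ) + 2 = d / 2 + 1))]
      ring
  -- X action on the bases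
  have hXs : ∀ k : Fin (d / 2), X.mulVec (sumVec F (d / 2) k)
      = if hk : (k : ℕ) = 0 then 0
        else sumVec F (d / 2) ⟨(k : ℕ) - 1, lt_of_le_of_lt (Nat.sub_le _ _) k.isLt⟩ := by
    intro k
    funext a
    by_cases hk : (k : ℕ) = 0
    · rw [dif_pos hk]
      cases a with
      | inl i =>
        simp only [sumVec, Matrix.mulVec_add, Matrix.mulVec_single_one, Matrix.col_apply, Pi.add_apply, Pi.zero_apply]
        rw [hXee, hXef, if_neg (by omega)]; ring
      | inr i =>
        simp only [sumVec, Matrix.mulVec_add, Matrix.mulVec_single_one, Matrix.col_apply, Pi.add_apply, Pi.zero_apply]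
        rw [hXfe, hXff, if_neg (by omega)]; ring
    · rw [dif_neg hk]
      cases a with
      | inl i =>
        simp only [sumVec, Matrix.mulVec_add, Matrix.mulVec_single_one, Matrix.col_apply, Pi.add_apply,
          Pi.single_apply, Sum.inl.injEq, reduceCtorEq, if_false, Fin.ext_iff, Fin.val_mk]
        rw [hXee, hXef]
        by_cases h : (i : ℕ) + 1 = (k : ℕ)
        · rw [if_pos h, if_pos (by omega)]
        · rw [if_neg h, if_neg (by omega)]
      | inr i =>
        simp only [sumVec, Matrix.mulVec_add, Matrix.mulVec_single_one, Matrix.col_apply, Pi.add_apply,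
          Pi.single_apply, Sum.inr.injEq, reduceCtorEq, if_false, Fin.ext_iff, Fin.val_mk]
        rw [hXfe, hXff]
        by_cases h : (i : ℕ) + 1 = (k : ℕ)
        · rw [if_pos h, if_pos (by omega)]
        · rw [if_neg h, if_neg (by omega)]
  have hXd : ∀ k : Fin (d / 2), X.mulVec (diffVec F (d / 2) k)
      = if hk : (k : ℕ) = 0 then 0
        else diffVec F (d / 2) ⟨(k : ℕ) - 1, lt_of_le_of_lt (Nat.sub_le _ _) k.isLt⟩ := by
    intro k
    funext a
    by_cases hk : (k : ℕ) = 0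
    · rw [dif_pos hk]
      cases a with
      | inl i =>
        simp only [diffVec, Matrix.mulVec_sub, Matrix.mulVec_single_one, Matrix.col_apply, Pi.sub_apply, Pi.zero_apply]
        rw [hXee, hXef, if_neg (by omega)]; ring
      | inr i =>
        simp only [diffVec, Matrix.mulVec_sub, Matrix.mulVec_single_one, Matrix.col_apply, Pi.sub_apply, Pi.zero_apply]
        rw [hXfe, hXff, if_neg (by omega)]; ring
    · rw [dif_neg hk]
      cases a with
      | inl i =>
        simp only [diffVec, Matrix.mulVec_sub, Matrix.mulVec_single_one, Matrix.col_apply, Pi.sub_apply,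
          Pi.single_apply, Sum.inl.injEq, reduceCtorEq, if_false, Fin.ext_iff, Fin.val_mk]
        rw [hXee, hXef]
        by_cases h : (i : ℕ) + 1 = (k : ℕ)
        · rw [if_pos h, if_pos (by omega)]
        · rw [if_neg h, if_neg (by omega)]
      | inr i =>
        simp only [diffVec, Matrix.mulVec_sub, Matrix.mulVec_single_one, Matrix.col_apply, Pi.sub_apply,
          Pi.single_apply, Sum.inr.injEq, reduceCtorEq, if_false, Fin.ext_iff, Fin.val_mk]
        rw [hXfe, hXff]
        by_cases h : (i : ℕ) + 1 = (k : ℕ)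
        · rw [if_pos h, if_pos (by omega)]
        · rw [if_neg h, if_neg (by omega)]
  -- component conditions from span membership
  have hmemS : ∀ v ∈ Submodule.span F (Set.range (sumVec F (d / 2))),
      ∀ i : Fin (d / 2), v (Sum.inl i) = v (Sum.inr i) := by
    intro v hv i
    have hle : Submodule.span F (Set.range (sumVec F (d / 2))) ≤ LinearMap.ker
        ((LinearMap.proj (Sum.inl i) : ((Fin (d / 2) ⊕ Fin (d / 2)) → F) →ₗ[F] F)
          - LinearMap.proj (Sum.inr i)) := by
      rw [Submodule.span_le]
      rintro _ ⟨j, rfl⟩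
      simp [sumVec, Pi.single_apply]
    have h := hle hv
    simp only [LinearMap.mem_ker, LinearMap.sub_apply, LinearMap.proj_apply] at h
    exact sub_eq_zero.mp h
  have hmemD : ∀ v ∈ Submodule.span F (Set.range (diffVec F (d / 2))),
      ∀ i : Fin (d / 2), v (Sum.inl i) = -v (Sum.inr i) := by
    intro v hv i
    have hle : Submodule.span F (Set.range (diffVec F (d / 2))) ≤ LinearMap.ker
        ((LinearMap.proj (Sum.inl i) : ((Fin (d / 2) ⊕ Fin (d / 2)) → F) →ₗ[F] F)
          + LinearMap.proj (Sum.inr i)) := by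
      rw [Submodule.span_le]
      rintro _ ⟨j, rfl⟩
      simp [diffVec, Pi.single_apply]
    have h := hle hv
    simp only [LinearMap.mem_ker, LinearMap.add_apply, LinearMap.proj_apply] at h
    exact eq_neg_of_add_eq_zero_left h
  -- representation lemmas
  have hrepS : ∀ v : (Fin (d / 2) ⊕ Fin (d / 2)) → F,
      (∀ i, v (Sum.inl i) = v (Sum.inr i)) →
      v ∈ Submodule.span F (Set.range (sumVec F (d / 2))) := by
    intro v hv
    have hvsum : v = ∑ i : Fin (d / 2), v (Sum.inl i) • sumVec F (d / 2) i := by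
      funext a
      rw [Finset.sum_apply]
      cases a with
      | inl i =>
        simp [sumVec, Pi.single_apply]
      | inr i =>
        simp [sumVec, Pi.single_apply, ← hv i]
    rw [hvsum]
    exact Submodule.sum_mem _ fun i _ =>
      Submodule.smul_mem _ _ (Submodule.subset_span ⟨i, rfl⟩)
  have hrepD : ∀ v : (Fin (d / 2) ⊕ Fin (d / 2)) → F,
      (∀ i, v (Sum.inl i) = -v (Sum.inr i)) →
      v ∈ Submodule.span F (Set.range (diffVec F (d / 2))) := by
    intro v hv
    have hvsum : v = ∑ i : Fin (d / 2), v (Sum.inl i) • diffVec F (d / 2) i := by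
      funext a
      rw [Finset.sum_apply]
      cases a with
      | inl i =>
        simp [diffVec, Pi.single_apply]
      | inr i =>
        have : v (Sum.inr i) = -v (Sum.inl i) := by rw [hv i]; ring
        simp [diffVec, Pi.single_apply, this]
    rw [hvsum]
    exact Submodule.sum_mem _ fun i _ =>
      Submodule.smul_mem _ _ (Submodule.subset_span ⟨i, rfl⟩)
  -- IsCompl
  have hdisj : Disjoint (Submodule.span F (Set.range (sumVec F (d / 2))))
      (Submodule.span F (Set.range (diffVec F (d / 2)))) := by
    rw [Submodule.disjoint_def]
    intro v hvS hvD
    have h1 := hmemS v hvS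
    have h2 := hmemD v hvD
    have hz : ∀ i : Fin (d / 2), v (Sum.inl i) = 0 := by
      intro i
      have h3 : (2 : F) * v (Sum.inl i) = 0 := by
        have := h2 i
        rw [← h1 i] at this
        linear_combination this
      rcases mul_eq_zero.mp h3 with h | h
      · exact absurd h two_ne
      · exact h
    funext a
    cases a with
    | inl i => exact hz i
    | inr i => rw [← h1 i]; exact hz i
  have hcod : Codisjoint (Submodule.span F (Set.range (sumVec F (d / 2))))
      (Submodule.span F (Set.range (diffVec F (d / 2)))) := by
    rw [codisjoint_iff, eq_top_iff]
    intro v _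
    set g : Fin (d / 2) → F := fun i => (v (Sum.inl i) + v (Sum.inr i)) / 2 with hg
    set h : Fin (d / 2) → F := fun i => (v (Sum.inl i) - v (Sum.inr i)) / 2 with hh
    have hvp : (Sum.elim g g : (Fin (d / 2) ⊕ Fin (d / 2)) → F)
        ∈ Submodule.span F (Set.range (sumVec F (d / 2))) := hrepS _ (fun i => rfl)
    have hvm : (Sum.elim h (fun i => -h i) : (Fin (d / 2) ⊕ Fin (d / 2)) → F)
        ∈ Submodule.span F (Set.range (diffVec F (d / 2))) := hrepD _ (by intro i; simp)
    have hdec : v = Sum.elim g g + Sum.elim h (fun i => -h i) := by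
      funext a
      cases a with
      | inl i => simp only [Pi.add_apply, Sum.elim_inl, hg, hh]; field_simp; ring
      | inr i => simp only [Pi.add_apply, Sum.elim_inr, hg, hh]; field_simp; ring
    rw [hdec]
    exact Submodule.add_mem _ (Submodule.mem_sup_left hvp) (Submodule.mem_sup_right hvm)
  -- X stability
  have hstabS : ∀ v ∈ Submodule.span F (Set.range (sumVec F (d / 2))),
      X.mulVec v ∈ Submodule.span F (Set.range (sumVec F (d / 2))) := by
    intro v hv
    have hle : Submodule.span F (Set.range (sumVec F (d / 2))) ≤
        Submodule.comap (Matrix.mulVecLin X) (Submodule.span F (Set.range (sumVec F (d / 2)))) := by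
      rw [Submodule.span_le]
      rintro _ ⟨k, rfl⟩
      simp only [Set.mem_setOf_eq, SetLike.mem_coe, Submodule.mem_comap, Matrix.mulVecLin_apply]
      rw [hXs k]
      split
      · exact Submodule.zero_mem _
      · exact Submodule.subset_span ⟨_, rfl⟩
    have := hle hv
    simpa only [Submodule.mem_comap, Matrix.mulVecLin_apply] using this
  have hstabD : ∀ v ∈ Submodule.span F (Set.range (diffVec F (d / 2))),
      X.mulVec v ∈ Submodule.span F (Set.range (diffVec F (d / 2))) := by
    intro v hv
    have hle : Submodule.span F (Set.range (diffVec F (d / 2))) ≤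
        Submodule.comap (Matrix.mulVecLin X) (Submodule.span F (Set.range (diffVec F (d / 2)))) := by
      rw [Submodule.span_le]
      rintro _ ⟨k, rfl⟩
      simp only [Set.mem_setOf_eq, SetLike.mem_coe, Submodule.mem_comap, Matrix.mulVecLin_apply]
      rw [hXd k]
      split
      · exact Submodule.zero_mem _
      · exact Submodule.subset_span ⟨_, rfl⟩
    have := hle hv
    simpa only [Submodule.mem_comap, Matrix.mulVecLin_apply] using this
  -- orthogonality
  have horth1 : ∀ (k : Fin (d / 2)), ∀ w ∈ Submodule.span F (Set.range (diffVec F (d / 2))),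
      sumVec F (d / 2) k ⬝ᵥ B.mulVec w = 0 := by
    intro k w hw
    induction hw using Submodule.span_induction with
    | mem x hx => obtain ⟨j, rfl⟩ := hx; exact gram_sd k j
    | zero => simp
    | add x y hx hy ihx ihy => rw [Matrix.mulVec_add, dotProduct_add, ihx, ihy, add_zero]
    | smul a x hx ih => rw [Matrix.mulVec_smul, dotProduct_smul, ih, smul_zero]
  have horth : ∀ v ∈ Submodule.span F (Set.range (sumVec F (d / 2))),
      ∀ w ∈ Submodule.span F (Set.range (diffVec F (d / 2))), v ⬝ᵥ B.mulVec w = 0 := by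
    intro v hv
    induction hv using Submodule.span_induction with
    | mem x hx => obtain ⟨k, rfl⟩ := hx; exact fun w hw => horth1 k w hw
    | zero => intro w hw; simp
    | add x y hx hy ihx ihy => intro w hw; rw [add_dotProduct, ihx w hw, ihy w hw, add_zero]
    | smul a x hx ih => intro w hw; rw [smul_dotProduct, ih w hw, smul_zero]
  -- nondegeneracy on the plus part
  have hndS : ∀ v ∈ Submodule.span F (Set.range (sumVec F (d / 2))),
      (∀ w ∈ Submodule.span F (Set.range (sumVec F (d / 2))), v ⬝ᵥ B.mulVec w = 0) → v = 0 := by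
    intro v hv hall
    have hc := hmemS v hv
    have key : ∀ i : Fin (d / 2), v (Sum.inl i) = 0 := by
      intro i
      have hi := i.isLt
      have hjlt : d / 2 - 1 - (i : ℕ) < d / 2 := by omega
      set j : Fin (d / 2) := ⟨d / 2 - 1 - (i : ℕ), hjlt⟩ with hjdef
      have hjval : (j : ℕ) = d / 2 - 1 - (i : ℕ) := rfl
      have h0 := hall (sumVec F (d / 2) j) (Submodule.subset_span ⟨j, rfl⟩)
      rw [hBs] at h0
      have hsum : v ⬝ᵥ (Sum.elim
          (fun i' : Fin (d / 2) => if (i' : ℕ) + (j : ℕ) + 2 = d / 2 + 1 then (-1 : F) ^ ((i' : ℕ) + 1) else 0)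
          (fun i' : Fin (d / 2) => if (j : ℕ) + (i' : ℕ) + 2 = d / 2 + 1 then (-1 : F) ^ ((j : ℕ) + 1) else 0))
          = v (Sum.inl i) * (-1 : F) ^ ((i : ℕ) + 1) + v (Sum.inr i) * (-1 : F) ^ ((j : ℕ) + 1) := by
        simp only [dotProduct]
        rw [Fintype.sum_sum_type]
        simp only [Sum.elim_inl, Sum.elim_inr]
        congr 1
        · rw [Finset.sum_eq_single i]
          · rw [if_pos (by omega)]
          · intro b _ hb
            have hb' : (b : ℕ) ≠ (i : ℕ) := fun hh => hb (Fin.ext hh)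
            rw [if_neg (by omega), mul_zero]
          · intro hi'; exact absurd (Finset.mem_univ i) hi'
        · rw [Finset.sum_eq_single i]
          · rw [if_pos (by omega)]
          · intro b _ hb
            have hb' : (b : ℕ) ≠ (i : ℕ) := fun hh => hb (Fin.ext hh)
            rw [if_neg (by omega), mul_zero]
          · intro hi'; exact absurd (Finset.mem_univ i) hi'
      rw [hsum] at h0
      rw [← hc i, hpar (i : ℕ) (j : ℕ) (by omega)] at h0
      have h3 : v (Sum.inl i) * (2 * (-1 : F) ^ ((i : ℕ) + 1)) = 0 := by linear_combination h0
      rcases mul_eq_zero.mp h3 with hvv | hcc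
      · exact hvv
      · exact absurd hcc (mul_ne_zero two_ne (pow_ne_zero _ (by norm_num)))
    funext a
    cases a with
    | inl i => exact key i
    | inr i => rw [← hc i]; exact key i
  -- nondegeneracy on the minus part
  have hndD : ∀ v ∈ Submodule.span F (Set.range (diffVec F (d / 2))),
      (∀ w ∈ Submodule.span F (Set.range (diffVec F (d / 2))), v ⬝ᵥ B.mulVec w = 0) → v = 0 := by
    intro v hv hall
    have hc := hmemD v hv
    have key : ∀ i : Fin (d / 2), v (Sum.inl i) = 0 := by
      intro i
      have hi := i.isLt
      have hjlt : d / 2 - 1 - (i : ℕ) < d / 2 := by omega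
      set j : Fin (d / 2) := ⟨d / 2 - 1 - (i : ℕ), hjlt⟩ with hjdef
      have hjval : (j : ℕ) = d / 2 - 1 - (i : ℕ) := rfl
      have h0 := hall (diffVec F (d / 2) j) (Submodule.subset_span ⟨j, rfl⟩)
      rw [hBd] at h0
      have hsum : v ⬝ᵥ (Sum.elim
          (fun i' : Fin (d / 2) => -(if (i' : ℕ) + (j : ℕ) + 2 = d / 2 + 1 then (-1 : F) ^ ((i' : ℕ) + 1) else 0))
          (fun i' : Fin (d / 2) => if (j : ℕ) + (i' : ℕ) + 2 = d / 2 + 1 then (-1 : F) ^ ((j : ℕ) + 1) else 0))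
          = v (Sum.inl i) * -((-1 : F) ^ ((i : ℕ) + 1)) + v (Sum.inr i) * (-1 : F) ^ ((j : ℕ) + 1) := by
        simp only [dotProduct]
        rw [Fintype.sum_sum_type]
        simp only [Sum.elim_inl, Sum.elim_inr]
        congr 1
        · rw [Finset.sum_eq_single i]
          · rw [if_pos (by omega)]
          · intro b _ hb
            have hb' : (b : ℕ) ≠ (i : ℕ) := fun hh => hb (Fin.ext hh)
            rw [if_neg (by omega), neg_zero, mul_zero]
          · intro hi'; exact absurd (Finset.mem_univ i) hi'
        · rw [Finset.sum_eq_single i]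
          · rw [if_pos (by omega)]
          · intro b _ hb
            have hb' : (b : ℕ) ≠ (i : ℕ) := fun hh => hb (Fin.ext hh)
            rw [if_neg (by omega), mul_zero]
          · intro hi'; exact absurd (Finset.mem_univ i) hi'
      rw [hsum] at h0
      have hvinr : v (Sum.inr i) = -v (Sum.inl i) := by rw [hc i]; ring
      rw [hvinr, hpar (i : ℕ) (j : ℕ) (by omega)] at h0
      have h3 : v (Sum.inl i) * (2 * (-1 : F) ^ ((i : ℕ) + 1)) = 0 := by linear_combination -h0
      rcases mul_eq_zero.mp h3 with hvv | hcc
      · exact hvv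
      · exact absurd hcc (mul_ne_zero two_ne (pow_ne_zero _ (by norm_num)))
    funext a
    cases a with
    | inl i => exact key i
    | inr i =>
      have := hc i
      have hz := key i
      rw [hz] at this
      have : -v (Sum.inr i) = 0 := this.symm
      simpa using this
  exact ⟨⟨hdisj, hcod⟩, horth, hstabS, hstabD, gram_ss, gram_dd, hndS, hndD,
    Nat.odd_iff.mpr hmodd, hXs, hXd⟩
end
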